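/- arXiv:1807.04810 — 2 statements merged into one kernel-verified Lean document; each statement's English description precedes it below -/
import Mathlib

section
/- For every integer n ≥ 1, the graph Λ_n is a connected 3-regular simple graph on 16n⁴ vertices. -/
abbrev RSet := ZMod 2 × ZMod 2 × ZMod 2 × ZMod 2

def rmul (p q : RSet) : RSet :=
  (p.1 + q.1, p.2.1 + q.2.1, p.2.2.1 + q.2.2.1,
   p.2.2.2 + q.2.2.2 + p.2.1 * q.1 + p.2.2.1 * q.2.1 + p.2.2.1 * q.1)

def aR : RSet := (1, 0, 0, 0)
def bR : RSet := (0, 1, 0, 0)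
def cR : RSet := (0, 0, 1, 0)
def idR : RSet := (0, 0, 0, 0)
def zR : RSet := (0, 0, 0, 1)
def bcR : RSet := (0, 1, 1, 0)
def bzR : RSet := (0, 1, 0, 1)
def czR : RSet := (0, 0, 1, 1)
def bczR : RSet := (0, 1, 1, 1)

lemma rmul_aa : ∀ g : RSet, rmul aR (rmul aR g) = g := by decide
lemma rmul_bb : ∀ g : RSet, rmul bR (rmul bR g) = g := by decide
lemma rmul_cc : ∀ g : RSet, rmul cR (rmul cR g) = g := by decide

def MK : SimpleGraph RSet where
  Adj g h := g ≠ h ∧ (h = rmul aR g ∨ h = rmul bR g ∨ h = rmul cR g)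
  symm := ⟨by
    rintro g h ⟨hne, h1 | h1 | h1⟩
    · exact ⟨hne.symm, Or.inl (by rw [h1, rmul_aa])⟩
    · exact ⟨hne.symm, Or.inr (Or.inl (by rw [h1, rmul_bb]))⟩
    · exact ⟨hne.symm, Or.inr (Or.inr (by rw [h1, rmul_cc]))⟩⟩
  loopless := ⟨fun g hg => hg.1 rfl⟩

/-- Integer quadruples, recording voltages before reduction mod `n`. -/
abbrev ZQuad := ℤ × ℤ × ℤ × ℤ

/-- The voltage assignment `ζ` on the arcs of the Möbius–Kantor graph (with values
written in `ℤ⁴`; `e₁,…,e₄` are the standard basis vectors). -/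
def zetaZ (u v : RSet) : ZQuad :=
  if u = idR ∧ v = cR then (1, 0, 0, 0)
  else if u = cR ∧ v = bcR then (0, 1, 0, 0)
  else if u = bcR ∧ v = bzR then (0, 0, 1, 0)
  else if u = bzR ∧ v = zR then (0, 0, 0, 1)
  else if u = zR ∧ v = czR then (-1, 0, 0, 0)
  else if u = czR ∧ v = bczR then (0, -1, 0, 0)
  else if u = bczR ∧ v = bR then (0, 0, -1, 0)
  else if u = bR ∧ v = idR then (0, 0, 0, -1)
  else if u = cR ∧ v = idR then (-1, 0, 0, 0)
  else if u = bcR ∧ v = cR then (0, -1, 0, 0)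
  else if u = bzR ∧ v = bcR then (0, 0, -1, 0)
  else if u = zR ∧ v = bzR then (0, 0, 0, -1)
  else if u = czR ∧ v = zR then (1, 0, 0, 0)
  else if u = bczR ∧ v = czR then (0, 1, 0, 0)
  else if u = bR ∧ v = bczR then (0, 0, 1, 0)
  else if u = idR ∧ v = bR then (0, 0, 0, 1)
  else 0

lemma zetaZ_anti : ∀ u v : RSet, zetaZ v u = -zetaZ u v := by decide

/-- Quadruples over `ℤ/nℤ`. -/
abbrev NQuad (n : ℕ) := ZMod n × ZMod n × ZMod n × ZMod n

/-- Reduction of an integer quadruple modulo `n`. -/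
def castQuad (n : ℕ) (p : ZQuad) : NQuad n :=
  ((p.1 : ZMod n), (p.2.1 : ZMod n), (p.2.2.1 : ZMod n), (p.2.2.2 : ZMod n))

lemma castQuad_neg (n : ℕ) (p : ZQuad) : castQuad n (-p) = -castQuad n p := by
  simp [castQuad, Prod.ext_iff]

/-- The covering graph `Λ_n` of the Möbius–Kantor graph derived from the voltage
assignment `ζ` with values in `(ℤ/nℤ)⁴`. -/
def Lam (n : ℕ) : SimpleGraph (RSet × NQuad n) where
  Adj p q := MK.Adj p.1 q.1 ∧ q.2 = p.2 + castQuad n (zetaZ p.1 q.1)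
  symm := ⟨by
    rintro ⟨u, x⟩ ⟨v, y⟩ ⟨hadj, hy⟩
    refine ⟨hadj.symm, ?_⟩
    rw [zetaZ_anti u v, castQuad_neg, hy]
    abel⟩
  loopless := ⟨fun p hp => MK.loopless.irrefl p.1 hp.1⟩


instance : DecidableRel MK.Adj := fun g h =>
  inferInstanceAs (Decidable (g ≠ h ∧ (h = rmul aR g ∨ h = rmul bR g ∨ h = rmul cR g)))

lemma castQuad_add (n : ℕ) (p q : ZQuad) :
    castQuad n (p + q) = castQuad n p + castQuad n q := by
  simp [castQuad, Prod.ext_iff]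

lemma reach_cons {n : ℕ} {u w : RSet} {x z : NQuad n} {v : RSet} {y : NQuad n}
    (h1 : (Lam n).Adj (u, x) (v, y)) (h2 : (Lam n).Reachable (v, y) (w, z)) :
    (Lam n).Reachable (u, x) (w, z) := h1.reachable.trans h2

lemma cycE1 (n : ℕ) (x : NQuad n) :
    (Lam n).Reachable (idR, x) (idR, x + castQuad n ((1, 0, 0, 0) : ZQuad)) := by
  refine reach_cons (v := cR) (y := x + castQuad n ((1, 0, 0, 0) : ZQuad)) ⟨(by decide : MK.Adj idR cR), by rw [show zetaZ idR cR = ((1, 0, 0, 0) : ZQuad) from by decide]⟩ ?_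
  refine reach_cons (v := ((1, 0, 1, 0) : RSet)) (y := x + castQuad n ((1, 0, 0, 0) : ZQuad)) ⟨(by decide : MK.Adj cR ((1, 0, 1, 0) : RSet)), by rw [show zetaZ cR ((1, 0, 1, 0) : RSet) = ((0, 0, 0, 0) : ZQuad) from by decide, add_assoc, ← castQuad_add, show ((1, 0, 0, 0) : ZQuad) + ((0, 0, 0, 0) : ZQuad) = ((1, 0, 0, 0) : ZQuad) from by decide]⟩ ?_
  refine reach_cons (v := ((1, 1, 1, 1) : RSet)) (y := x + castQuad n ((1, 0, 0, 0) : ZQuad)) ⟨(by decide : MK.Adj ((1, 0, 1, 0) : RSet) ((1, 1, 1, 1) : RSet)), by rw [show zetaZ ((1, 0, 1, 0) : RSet) ((1, 1, 1, 1) : RSet) = ((0, 0, 0, 0) : ZQuad) from by decide, add_assoc, ← castQuad_add, show ((1, 0, 0, 0) : ZQuad) + ((0, 0, 0, 0) : ZQuad) = ((1, 0, 0, 0) : ZQuad) from by decide]⟩ ?_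
  refine reach_cons (v := ((1, 1, 0, 1) : RSet)) (y := x + castQuad n ((1, 0, 0, 0) : ZQuad)) ⟨(by decide : MK.Adj ((1, 1, 1, 1) : RSet) ((1, 1, 0, 1) : RSet)), by rw [show zetaZ ((1, 1, 1, 1) : RSet) ((1, 1, 0, 1) : RSet) = ((0, 0, 0, 0) : ZQuad) from by decide, add_assoc, ← castQuad_add, show ((1, 0, 0, 0) : ZQuad) + ((0, 0, 0, 0) : ZQuad) = ((1, 0, 0, 0) : ZQuad) from by decide]⟩ ?_
  refine reach_cons (v := aR) (y := x + castQuad n ((1, 0, 0, 0) : ZQuad)) ⟨(by decide : MK.Adj ((1, 1, 0, 1) : RSet) aR), by rw [show zetaZ ((1, 1, 0, 1) : RSet) aR = ((0, 0, 0, 0) : ZQuad) from by decide, add_assoc, ← castQuad_add, show ((1, 0, 0, 0) : ZQuad) + ((0, 0, 0, 0) : ZQuad) = ((1, 0, 0, 0) : ZQuad) from by decide]⟩ ?_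
  exact SimpleGraph.Adj.reachable ⟨(by decide : MK.Adj aR idR), by rw [show zetaZ aR idR = ((0, 0, 0, 0) : ZQuad) from by decide, add_assoc, ← castQuad_add, show ((1, 0, 0, 0) : ZQuad) + ((0, 0, 0, 0) : ZQuad) = ((1, 0, 0, 0) : ZQuad) from by decide]⟩

lemma cycE2 (n : ℕ) (x : NQuad n) :
    (Lam n).Reachable (idR, x) (idR, x + castQuad n ((0, 1, 0, 0) : ZQuad)) := by
  refine reach_cons (v := aR) (y := x + castQuad n ((0, 0, 0, 0) : ZQuad)) ⟨(by decide : MK.Adj idR aR), by rw [show zetaZ idR aR = ((0, 0, 0, 0) : ZQuad) from by decide]⟩ ?_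
  refine reach_cons (v := ((1, 1, 0, 1) : RSet)) (y := x + castQuad n ((0, 0, 0, 0) : ZQuad)) ⟨(by decide : MK.Adj aR ((1, 1, 0, 1) : RSet)), by rw [show zetaZ aR ((1, 1, 0, 1) : RSet) = ((0, 0, 0, 0) : ZQuad) from by decide, add_assoc, ← castQuad_add, show ((0, 0, 0, 0) : ZQuad) + ((0, 0, 0, 0) : ZQuad) = ((0, 0, 0, 0) : ZQuad) from by decide]⟩ ?_
  refine reach_cons (v := ((1, 1, 1, 1) : RSet)) (y := x + castQuad n ((0, 0, 0, 0) : ZQuad)) ⟨(by decide : MK.Adj ((1, 1, 0, 1) : RSet) ((1, 1, 1, 1) : RSet)), by rw [show zetaZ ((1, 1, 0, 1) : RSet) ((1, 1, 1, 1) : RSet) = ((0, 0, 0, 0) : ZQuad) from by decide, add_assoc, ← castQuad_add, show ((0, 0, 0, 0) : ZQuad) + ((0, 0, 0, 0) : ZQuad) = ((0, 0, 0, 0) : ZQuad) from by decide]⟩ ?_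
  refine reach_cons (v := bczR) (y := x + castQuad n ((0, 0, 0, 0) : ZQuad)) ⟨(by decide : MK.Adj ((1, 1, 1, 1) : RSet) bczR), by rw [show zetaZ ((1, 1, 1, 1) : RSet) bczR = ((0, 0, 0, 0) : ZQuad) from by decide, add_assoc, ← castQuad_add, show ((0, 0, 0, 0) : ZQuad) + ((0, 0, 0, 0) : ZQuad) = ((0, 0, 0, 0) : ZQuad) from by decide]⟩ ?_
  refine reach_cons (v := czR) (y := x + castQuad n ((0, 1, 0, 0) : ZQuad)) ⟨(by decide : MK.Adj bczR czR), by rw [show zetaZ bczR czR = ((0, 1, 0, 0) : ZQuad) from by decide, add_assoc, ← castQuad_add, show ((0, 0, 0, 0) : ZQuad) + ((0, 1, 0, 0) : ZQuad) = ((0, 1, 0, 0) : ZQuad) from by decide]⟩ ?_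
  refine reach_cons (v := ((1, 0, 1, 1) : RSet)) (y := x + castQuad n ((0, 1, 0, 0) : ZQuad)) ⟨(by decide : MK.Adj czR ((1, 0, 1, 1) : RSet)), by rw [show zetaZ czR ((1, 0, 1, 1) : RSet) = ((0, 0, 0, 0) : ZQuad) from by decide, add_assoc, ← castQuad_add, show ((0, 1, 0, 0) : ZQuad) + ((0, 0, 0, 0) : ZQuad) = ((0, 1, 0, 0) : ZQuad) from by decide]⟩ ?_
  refine reach_cons (v := aR) (y := x + castQuad n ((0, 1, 0, 0) : ZQuad)) ⟨(by decide : MK.Adj ((1, 0, 1, 1) : RSet) aR), by rw [show zetaZ ((1, 0, 1, 1) : RSet) aR = ((0, 0, 0, 0) : ZQuad) from by decide, add_assoc, ← castQuad_add, show ((0, 1, 0, 0) : ZQuad) + ((0, 0, 0, 0) : ZQuad) = ((0, 1, 0, 0) : ZQuad) from by decide]⟩ ?_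
  exact SimpleGraph.Adj.reachable ⟨(by decide : MK.Adj aR idR), by rw [show zetaZ aR idR = ((0, 0, 0, 0) : ZQuad) from by decide, add_assoc, ← castQuad_add, show ((0, 1, 0, 0) : ZQuad) + ((0, 0, 0, 0) : ZQuad) = ((0, 1, 0, 0) : ZQuad) from by decide]⟩

lemma cycE3 (n : ℕ) (x : NQuad n) :
    (Lam n).Reachable (idR, x) (idR, x + castQuad n ((0, 0, 1, 0) : ZQuad)) := by
  refine reach_cons (v := bR) (y := x + castQuad n ((0, 0, 0, 1) : ZQuad)) ⟨(by decide : MK.Adj idR bR), by rw [show zetaZ idR bR = ((0, 0, 0, 1) : ZQuad) from by decide]⟩ ?_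
  refine reach_cons (v := bczR) (y := x + castQuad n ((0, 0, 1, 1) : ZQuad)) ⟨(by decide : MK.Adj bR bczR), by rw [show zetaZ bR bczR = ((0, 0, 1, 0) : ZQuad) from by decide, add_assoc, ← castQuad_add, show ((0, 0, 0, 1) : ZQuad) + ((0, 0, 1, 0) : ZQuad) = ((0, 0, 1, 1) : ZQuad) from by decide]⟩ ?_
  refine reach_cons (v := ((1, 1, 1, 1) : RSet)) (y := x + castQuad n ((0, 0, 1, 1) : ZQuad)) ⟨(by decide : MK.Adj bczR ((1, 1, 1, 1) : RSet)), by rw [show zetaZ bczR ((1, 1, 1, 1) : RSet) = ((0, 0, 0, 0) : ZQuad) from by decide, add_assoc, ← castQuad_add, show ((0, 0, 1, 1) : ZQuad) + ((0, 0, 0, 0) : ZQuad) = ((0, 0, 1, 1) : ZQuad) from by decide]⟩ ?_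
  refine reach_cons (v := ((1, 0, 1, 0) : RSet)) (y := x + castQuad n ((0, 0, 1, 1) : ZQuad)) ⟨(by decide : MK.Adj ((1, 1, 1, 1) : RSet) ((1, 0, 1, 0) : RSet)), by rw [show zetaZ ((1, 1, 1, 1) : RSet) ((1, 0, 1, 0) : RSet) = ((0, 0, 0, 0) : ZQuad) from by decide, add_assoc, ← castQuad_add, show ((0, 0, 1, 1) : ZQuad) + ((0, 0, 0, 0) : ZQuad) = ((0, 0, 1, 1) : ZQuad) from by decide]⟩ ?_
  refine reach_cons (v := ((1, 0, 0, 1) : RSet)) (y := x + castQuad n ((0, 0, 1, 1) : ZQuad)) ⟨(by decide : MK.Adj ((1, 0, 1, 0) : RSet) ((1, 0, 0, 1) : RSet)), by rw [show zetaZ ((1, 0, 1, 0) : RSet) ((1, 0, 0, 1) : RSet) = ((0, 0, 0, 0) : ZQuad) from by decide, add_assoc, ← castQuad_add, show ((0, 0, 1, 1) : ZQuad) + ((0, 0, 0, 0) : ZQuad) = ((0, 0, 1, 1) : ZQuad) from by decide]⟩ ?_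
  refine reach_cons (v := ((1, 1, 0, 0) : RSet)) (y := x + castQuad n ((0, 0, 1, 1) : ZQuad)) ⟨(by decide : MK.Adj ((1, 0, 0, 1) : RSet) ((1, 1, 0, 0) : RSet)), by rw [show zetaZ ((1, 0, 0, 1) : RSet) ((1, 1, 0, 0) : RSet) = ((0, 0, 0, 0) : ZQuad) from by decide, add_assoc, ← castQuad_add, show ((0, 0, 1, 1) : ZQuad) + ((0, 0, 0, 0) : ZQuad) = ((0, 0, 1, 1) : ZQuad) from by decide]⟩ ?_
  refine reach_cons (v := bR) (y := x + castQuad n ((0, 0, 1, 1) : ZQuad)) ⟨(by decide : MK.Adj ((1, 1, 0, 0) : RSet) bR), by rw [show zetaZ ((1, 1, 0, 0) : RSet) bR = ((0, 0, 0, 0) : ZQuad) from by decide, add_assoc, ← castQuad_add, show ((0, 0, 1, 1) : ZQuad) + ((0, 0, 0, 0) : ZQuad) = ((0, 0, 1, 1) : ZQuad) from by decide]⟩ ?_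
  exact SimpleGraph.Adj.reachable ⟨(by decide : MK.Adj bR idR), by rw [show zetaZ bR idR = ((0, 0, 0, -1) : ZQuad) from by decide, add_assoc, ← castQuad_add, show ((0, 0, 1, 1) : ZQuad) + ((0, 0, 0, -1) : ZQuad) = ((0, 0, 1, 0) : ZQuad) from by decide]⟩

lemma cycE4 (n : ℕ) (x : NQuad n) :
    (Lam n).Reachable (idR, x) (idR, x + castQuad n ((0, 0, 0, 1) : ZQuad)) := by
  refine reach_cons (v := bR) (y := x + castQuad n ((0, 0, 0, 1) : ZQuad)) ⟨(by decide : MK.Adj idR bR), by rw [show zetaZ idR bR = ((0, 0, 0, 1) : ZQuad) from by decide]⟩ ?_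
  refine reach_cons (v := ((1, 1, 0, 0) : RSet)) (y := x + castQuad n ((0, 0, 0, 1) : ZQuad)) ⟨(by decide : MK.Adj bR ((1, 1, 0, 0) : RSet)), by rw [show zetaZ bR ((1, 1, 0, 0) : RSet) = ((0, 0, 0, 0) : ZQuad) from by decide, add_assoc, ← castQuad_add, show ((0, 0, 0, 1) : ZQuad) + ((0, 0, 0, 0) : ZQuad) = ((0, 0, 0, 1) : ZQuad) from by decide]⟩ ?_
  refine reach_cons (v := ((1, 1, 1, 0) : RSet)) (y := x + castQuad n ((0, 0, 0, 1) : ZQuad)) ⟨(by decide : MK.Adj ((1, 1, 0, 0) : RSet) ((1, 1, 1, 0) : RSet)), by rw [show zetaZ ((1, 1, 0, 0) : RSet) ((1, 1, 1, 0) : RSet) = ((0, 0, 0, 0) : ZQuad) from by decide, add_assoc, ← castQuad_add, show ((0, 0, 0, 1) : ZQuad) + ((0, 0, 0, 0) : ZQuad) = ((0, 0, 0, 1) : ZQuad) from by decide]⟩ ?_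
  refine reach_cons (v := ((1, 0, 1, 1) : RSet)) (y := x + castQuad n ((0, 0, 0, 1) : ZQuad)) ⟨(by decide : MK.Adj ((1, 1, 1, 0) : RSet) ((1, 0, 1, 1) : RSet)), by rw [show zetaZ ((1, 1, 1, 0) : RSet) ((1, 0, 1, 1) : RSet) = ((0, 0, 0, 0) : ZQuad) from by decide, add_assoc, ← castQuad_add, show ((0, 0, 0, 1) : ZQuad) + ((0, 0, 0, 0) : ZQuad) = ((0, 0, 0, 1) : ZQuad) from by decide]⟩ ?_
  refine reach_cons (v := aR) (y := x + castQuad n ((0, 0, 0, 1) : ZQuad)) ⟨(by decide : MK.Adj ((1, 0, 1, 1) : RSet) aR), by rw [show zetaZ ((1, 0, 1, 1) : RSet) aR = ((0, 0, 0, 0) : ZQuad) from by decide, add_assoc, ← castQuad_add, show ((0, 0, 0, 1) : ZQuad) + ((0, 0, 0, 0) : ZQuad) = ((0, 0, 0, 1) : ZQuad) from by decide]⟩ ?_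
  exact SimpleGraph.Adj.reachable ⟨(by decide : MK.Adj aR idR), by rw [show zetaZ aR idR = ((0, 0, 0, 0) : ZQuad) from by decide, add_assoc, ← castQuad_add, show ((0, 0, 0, 1) : ZQuad) + ((0, 0, 0, 0) : ZQuad) = ((0, 0, 0, 1) : ZQuad) from by decide]⟩

lemma toid1 (n : ℕ) (x : NQuad n) :
    (Lam n).Reachable (zR, x) (idR, x + castQuad n ((-1, -1, -1, -1) : ZQuad)) := by
  refine reach_cons (v := bzR) (y := x + castQuad n ((0, 0, 0, -1) : ZQuad)) ⟨(by decide : MK.Adj zR bzR), by rw [show zetaZ zR bzR = ((0, 0, 0, -1) : ZQuad) from by decide]⟩ ?_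
  refine reach_cons (v := bcR) (y := x + castQuad n ((0, 0, -1, -1) : ZQuad)) ⟨(by decide : MK.Adj bzR bcR), by rw [show zetaZ bzR bcR = ((0, 0, -1, 0) : ZQuad) from by decide, add_assoc, ← castQuad_add, show ((0, 0, 0, -1) : ZQuad) + ((0, 0, -1, 0) : ZQuad) = ((0, 0, -1, -1) : ZQuad) from by decide]⟩ ?_
  refine reach_cons (v := cR) (y := x + castQuad n ((0, -1, -1, -1) : ZQuad)) ⟨(by decide : MK.Adj bcR cR), by rw [show zetaZ bcR cR = ((0, -1, 0, 0) : ZQuad) from by decide, add_assoc, ← castQuad_add, show ((0, 0, -1, -1) : ZQuad) + ((0, -1, 0, 0) : ZQuad) = ((0, -1, -1, -1) : ZQuad) from by decide]⟩ ?_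
  exact SimpleGraph.Adj.reachable ⟨(by decide : MK.Adj cR idR), by rw [show zetaZ cR idR = ((-1, 0, 0, 0) : ZQuad) from by decide, add_assoc, ← castQuad_add, show ((0, -1, -1, -1) : ZQuad) + ((-1, 0, 0, 0) : ZQuad) = ((-1, -1, -1, -1) : ZQuad) from by decide]⟩

lemma toid2 (n : ℕ) (x : NQuad n) :
    (Lam n).Reachable (cR, x) (idR, x + castQuad n ((-1, 0, 0, 0) : ZQuad)) := by
  exact SimpleGraph.Adj.reachable ⟨(by decide : MK.Adj cR idR), by rw [show zetaZ cR idR = ((-1, 0, 0, 0) : ZQuad) from by decide]⟩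

lemma toid3 (n : ℕ) (x : NQuad n) :
    (Lam n).Reachable (czR, x) (idR, x + castQuad n ((0, -1, -1, -1) : ZQuad)) := by
  refine reach_cons (v := bczR) (y := x + castQuad n ((0, -1, 0, 0) : ZQuad)) ⟨(by decide : MK.Adj czR bczR), by rw [show zetaZ czR bczR = ((0, -1, 0, 0) : ZQuad) from by decide]⟩ ?_
  refine reach_cons (v := bR) (y := x + castQuad n ((0, -1, -1, 0) : ZQuad)) ⟨(by decide : MK.Adj bczR bR), by rw [show zetaZ bczR bR = ((0, 0, -1, 0) : ZQuad) from by decide, add_assoc, ← castQuad_add, show ((0, -1, 0, 0) : ZQuad) + ((0, 0, -1, 0) : ZQuad) = ((0, -1, -1, 0) : ZQuad) from by decide]⟩ ?_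
  exact SimpleGraph.Adj.reachable ⟨(by decide : MK.Adj bR idR), by rw [show zetaZ bR idR = ((0, 0, 0, -1) : ZQuad) from by decide, add_assoc, ← castQuad_add, show ((0, -1, -1, 0) : ZQuad) + ((0, 0, 0, -1) : ZQuad) = ((0, -1, -1, -1) : ZQuad) from by decide]⟩

lemma toid4 (n : ℕ) (x : NQuad n) :
    (Lam n).Reachable (bR, x) (idR, x + castQuad n ((0, 0, 0, -1) : ZQuad)) := by
  exact SimpleGraph.Adj.reachable ⟨(by decide : MK.Adj bR idR), by rw [show zetaZ bR idR = ((0, 0, 0, -1) : ZQuad) from by decide]⟩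

lemma toid5 (n : ℕ) (x : NQuad n) :
    (Lam n).Reachable (bzR, x) (idR, x + castQuad n ((-1, -1, -1, 0) : ZQuad)) := by
  refine reach_cons (v := bcR) (y := x + castQuad n ((0, 0, -1, 0) : ZQuad)) ⟨(by decide : MK.Adj bzR bcR), by rw [show zetaZ bzR bcR = ((0, 0, -1, 0) : ZQuad) from by decide]⟩ ?_
  refine reach_cons (v := cR) (y := x + castQuad n ((0, -1, -1, 0) : ZQuad)) ⟨(by decide : MK.Adj bcR cR), by rw [show zetaZ bcR cR = ((0, -1, 0, 0) : ZQuad) from by decide, add_assoc, ← castQuad_add, show ((0, 0, -1, 0) : ZQuad) + ((0, -1, 0, 0) : ZQuad) = ((0, -1, -1, 0) : ZQuad) from by decide]⟩ ?_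
  exact SimpleGraph.Adj.reachable ⟨(by decide : MK.Adj cR idR), by rw [show zetaZ cR idR = ((-1, 0, 0, 0) : ZQuad) from by decide, add_assoc, ← castQuad_add, show ((0, -1, -1, 0) : ZQuad) + ((-1, 0, 0, 0) : ZQuad) = ((-1, -1, -1, 0) : ZQuad) from by decide]⟩

lemma toid6 (n : ℕ) (x : NQuad n) :
    (Lam n).Reachable (bcR, x) (idR, x + castQuad n ((-1, -1, 0, 0) : ZQuad)) := by
  refine reach_cons (v := cR) (y := x + castQuad n ((0, -1, 0, 0) : ZQuad)) ⟨(by decide : MK.Adj bcR cR), by rw [show zetaZ bcR cR = ((0, -1, 0, 0) : ZQuad) from by decide]⟩ ?_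
  exact SimpleGraph.Adj.reachable ⟨(by decide : MK.Adj cR idR), by rw [show zetaZ cR idR = ((-1, 0, 0, 0) : ZQuad) from by decide, add_assoc, ← castQuad_add, show ((0, -1, 0, 0) : ZQuad) + ((-1, 0, 0, 0) : ZQuad) = ((-1, -1, 0, 0) : ZQuad) from by decide]⟩

lemma toid7 (n : ℕ) (x : NQuad n) :
    (Lam n).Reachable (bczR, x) (idR, x + castQuad n ((0, 0, -1, -1) : ZQuad)) := by
  refine reach_cons (v := bR) (y := x + castQuad n ((0, 0, -1, 0) : ZQuad)) ⟨(by decide : MK.Adj bczR bR), by rw [show zetaZ bczR bR = ((0, 0, -1, 0) : ZQuad) from by decide]⟩ ?_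
  exact SimpleGraph.Adj.reachable ⟨(by decide : MK.Adj bR idR), by rw [show zetaZ bR idR = ((0, 0, 0, -1) : ZQuad) from by decide, add_assoc, ← castQuad_add, show ((0, 0, -1, 0) : ZQuad) + ((0, 0, 0, -1) : ZQuad) = ((0, 0, -1, -1) : ZQuad) from by decide]⟩

lemma toid8 (n : ℕ) (x : NQuad n) :
    (Lam n).Reachable (aR, x) (idR, x + castQuad n ((0, 0, 0, 0) : ZQuad)) := by
  exact SimpleGraph.Adj.reachable ⟨(by decide : MK.Adj aR idR), by rw [show zetaZ aR idR = ((0, 0, 0, 0) : ZQuad) from by decide]⟩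

lemma toid9 (n : ℕ) (x : NQuad n) :
    (Lam n).Reachable (((1, 0, 0, 1) : RSet), x) (idR, x + castQuad n ((-1, 0, 0, 0) : ZQuad)) := by
  refine reach_cons (v := ((1, 0, 1, 0) : RSet)) (y := x + castQuad n ((0, 0, 0, 0) : ZQuad)) ⟨(by decide : MK.Adj ((1, 0, 0, 1) : RSet) ((1, 0, 1, 0) : RSet)), by rw [show zetaZ ((1, 0, 0, 1) : RSet) ((1, 0, 1, 0) : RSet) = ((0, 0, 0, 0) : ZQuad) from by decide]⟩ ?_
  refine reach_cons (v := cR) (y := x + castQuad n ((0, 0, 0, 0) : ZQuad)) ⟨(by decide : MK.Adj ((1, 0, 1, 0) : RSet) cR), by rw [show zetaZ ((1, 0, 1, 0) : RSet) cR = ((0, 0, 0, 0) : ZQuad) from by decide, add_assoc, ← castQuad_add, show ((0, 0, 0, 0) : ZQuad) + ((0, 0, 0, 0) : ZQuad) = ((0, 0, 0, 0) : ZQuad) from by decide]⟩ ?_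
  exact SimpleGraph.Adj.reachable ⟨(by decide : MK.Adj cR idR), by rw [show zetaZ cR idR = ((-1, 0, 0, 0) : ZQuad) from by decide, add_assoc, ← castQuad_add, show ((0, 0, 0, 0) : ZQuad) + ((-1, 0, 0, 0) : ZQuad) = ((-1, 0, 0, 0) : ZQuad) from by decide]⟩

lemma toid10 (n : ℕ) (x : NQuad n) :
    (Lam n).Reachable (((1, 0, 1, 0) : RSet), x) (idR, x + castQuad n ((-1, 0, 0, 0) : ZQuad)) := by
  refine reach_cons (v := cR) (y := x + castQuad n ((0, 0, 0, 0) : ZQuad)) ⟨(by decide : MK.Adj ((1, 0, 1, 0) : RSet) cR), by rw [show zetaZ ((1, 0, 1, 0) : RSet) cR = ((0, 0, 0, 0) : ZQuad) from by decide]⟩ ?_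
  exact SimpleGraph.Adj.reachable ⟨(by decide : MK.Adj cR idR), by rw [show zetaZ cR idR = ((-1, 0, 0, 0) : ZQuad) from by decide, add_assoc, ← castQuad_add, show ((0, 0, 0, 0) : ZQuad) + ((-1, 0, 0, 0) : ZQuad) = ((-1, 0, 0, 0) : ZQuad) from by decide]⟩

lemma toid11 (n : ℕ) (x : NQuad n) :
    (Lam n).Reachable (((1, 0, 1, 1) : RSet), x) (idR, x + castQuad n ((0, 0, 0, 0) : ZQuad)) := by
  refine reach_cons (v := aR) (y := x + castQuad n ((0, 0, 0, 0) : ZQuad)) ⟨(by decide : MK.Adj ((1, 0, 1, 1) : RSet) aR), by rw [show zetaZ ((1, 0, 1, 1) : RSet) aR = ((0, 0, 0, 0) : ZQuad) from by decide]⟩ ?_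
  exact SimpleGraph.Adj.reachable ⟨(by decide : MK.Adj aR idR), by rw [show zetaZ aR idR = ((0, 0, 0, 0) : ZQuad) from by decide, add_assoc, ← castQuad_add, show ((0, 0, 0, 0) : ZQuad) + ((0, 0, 0, 0) : ZQuad) = ((0, 0, 0, 0) : ZQuad) from by decide]⟩

lemma toid12 (n : ℕ) (x : NQuad n) :
    (Lam n).Reachable (((1, 1, 0, 0) : RSet), x) (idR, x + castQuad n ((0, 0, 0, -1) : ZQuad)) := by
  refine reach_cons (v := bR) (y := x + castQuad n ((0, 0, 0, 0) : ZQuad)) ⟨(by decide : MK.Adj ((1, 1, 0, 0) : RSet) bR), by rw [show zetaZ ((1, 1, 0, 0) : RSet) bR = ((0, 0, 0, 0) : ZQuad) from by decide]⟩ ?_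
  exact SimpleGraph.Adj.reachable ⟨(by decide : MK.Adj bR idR), by rw [show zetaZ bR idR = ((0, 0, 0, -1) : ZQuad) from by decide, add_assoc, ← castQuad_add, show ((0, 0, 0, 0) : ZQuad) + ((0, 0, 0, -1) : ZQuad) = ((0, 0, 0, -1) : ZQuad) from by decide]⟩

lemma toid13 (n : ℕ) (x : NQuad n) :
    (Lam n).Reachable (((1, 1, 0, 1) : RSet), x) (idR, x + castQuad n ((0, 0, 0, 0) : ZQuad)) := by
  refine reach_cons (v := aR) (y := x + castQuad n ((0, 0, 0, 0) : ZQuad)) ⟨(by decide : MK.Adj ((1, 1, 0, 1) : RSet) aR), by rw [show zetaZ ((1, 1, 0, 1) : RSet) aR = ((0, 0, 0, 0) : ZQuad) from by decide]⟩ ?_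
  exact SimpleGraph.Adj.reachable ⟨(by decide : MK.Adj aR idR), by rw [show zetaZ aR idR = ((0, 0, 0, 0) : ZQuad) from by decide, add_assoc, ← castQuad_add, show ((0, 0, 0, 0) : ZQuad) + ((0, 0, 0, 0) : ZQuad) = ((0, 0, 0, 0) : ZQuad) from by decide]⟩

lemma toid14 (n : ℕ) (x : NQuad n) :
    (Lam n).Reachable (((1, 1, 1, 0) : RSet), x) (idR, x + castQuad n ((-1, -1, 0, 0) : ZQuad)) := by
  refine reach_cons (v := bcR) (y := x + castQuad n ((0, 0, 0, 0) : ZQuad)) ⟨(by decide : MK.Adj ((1, 1, 1, 0) : RSet) bcR), by rw [show zetaZ ((1, 1, 1, 0) : RSet) bcR = ((0, 0, 0, 0) : ZQuad) from by decide]⟩ ?_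
  refine reach_cons (v := cR) (y := x + castQuad n ((0, -1, 0, 0) : ZQuad)) ⟨(by decide : MK.Adj bcR cR), by rw [show zetaZ bcR cR = ((0, -1, 0, 0) : ZQuad) from by decide, add_assoc, ← castQuad_add, show ((0, 0, 0, 0) : ZQuad) + ((0, -1, 0, 0) : ZQuad) = ((0, -1, 0, 0) : ZQuad) from by decide]⟩ ?_
  exact SimpleGraph.Adj.reachable ⟨(by decide : MK.Adj cR idR), by rw [show zetaZ cR idR = ((-1, 0, 0, 0) : ZQuad) from by decide, add_assoc, ← castQuad_add, show ((0, -1, 0, 0) : ZQuad) + ((-1, 0, 0, 0) : ZQuad) = ((-1, -1, 0, 0) : ZQuad) from by decide]⟩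

lemma toid15 (n : ℕ) (x : NQuad n) :
    (Lam n).Reachable (((1, 1, 1, 1) : RSet), x) (idR, x + castQuad n ((-1, 0, 0, 0) : ZQuad)) := by
  refine reach_cons (v := ((1, 0, 1, 0) : RSet)) (y := x + castQuad n ((0, 0, 0, 0) : ZQuad)) ⟨(by decide : MK.Adj ((1, 1, 1, 1) : RSet) ((1, 0, 1, 0) : RSet)), by rw [show zetaZ ((1, 1, 1, 1) : RSet) ((1, 0, 1, 0) : RSet) = ((0, 0, 0, 0) : ZQuad) from by decide]⟩ ?_
  refine reach_cons (v := cR) (y := x + castQuad n ((0, 0, 0, 0) : ZQuad)) ⟨(by decide : MK.Adj ((1, 0, 1, 0) : RSet) cR), by rw [show zetaZ ((1, 0, 1, 0) : RSet) cR = ((0, 0, 0, 0) : ZQuad) from by decide, add_assoc, ← castQuad_add, show ((0, 0, 0, 0) : ZQuad) + ((0, 0, 0, 0) : ZQuad) = ((0, 0, 0, 0) : ZQuad) from by decide]⟩ ?_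
  exact SimpleGraph.Adj.reachable ⟨(by decide : MK.Adj cR idR), by rw [show zetaZ cR idR = ((-1, 0, 0, 0) : ZQuad) from by decide, add_assoc, ← castQuad_add, show ((0, 0, 0, 0) : ZQuad) + ((-1, 0, 0, 0) : ZQuad) = ((-1, 0, 0, 0) : ZQuad) from by decide]⟩

set_option synthInstance.maxSize 2000 in
set_option maxHeartbeats 1000000 in
lemma allR : ∀ v : RSet, v = idR ∨ v = zR ∨ v = cR ∨ v = czR ∨ v = bR ∨ v = bzR ∨ v = bcR ∨ v = bczR ∨ v = aR ∨ v = ((1, 0, 0, 1) : RSet) ∨ v = ((1, 0, 1, 0) : RSet) ∨ v = ((1, 0, 1, 1) : RSet) ∨ v = ((1, 1, 0, 0) : RSet) ∨ v = ((1, 1, 0, 1) : RSet) ∨ v = ((1, 1, 1, 0) : RSet) ∨ v = ((1, 1, 1, 1) : RSet) := by decide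

lemma toid (n : ℕ) (u : RSet) (x : NQuad n) :
    ∃ w, (Lam n).Reachable (u, x) (idR, w) := by
  rcases allR u with h|h|h|h|h|h|h|h|h|h|h|h|h|h|h|h <;> subst h
  · exact ⟨x, SimpleGraph.Reachable.refl _⟩
  · exact ⟨_, toid1 n x⟩
  · exact ⟨_, toid2 n x⟩
  · exact ⟨_, toid3 n x⟩
  · exact ⟨_, toid4 n x⟩
  · exact ⟨_, toid5 n x⟩
  · exact ⟨_, toid6 n x⟩
  · exact ⟨_, toid7 n x⟩
  · exact ⟨_, toid8 n x⟩
  · exact ⟨_, toid9 n x⟩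
  · exact ⟨_, toid10 n x⟩
  · exact ⟨_, toid11 n x⟩
  · exact ⟨_, toid12 n x⟩
  · exact ⟨_, toid13 n x⟩
  · exact ⟨_, toid14 n x⟩
  · exact ⟨_, toid15 n x⟩


lemma reach_smul (n : ℕ) (v : NQuad n)
    (h : ∀ x, (Lam n).Reachable (idR, x) (idR, x + v)) :
    ∀ (m : ℕ) (x : NQuad n), (Lam n).Reachable (idR, x) (idR, x + m • v) := by
  intro m
  induction m with
  | zero => intro x; simpa using SimpleGraph.Reachable.refl ((idR, x) : RSet × NQuad n)
  | succ k ih =>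
    intro x
    have h2 := (h x).trans (ih (x + v))
    have he : x + v + k • v = x + (k + 1) • v := by rw [succ_nsmul]; abel
    rwa [he] at h2

lemma reach_zero_all (n : ℕ) [NeZero n] (y : NQuad n) :
    (Lam n).Reachable (idR, (0 : NQuad n)) (idR, y) := by
  obtain ⟨m1, hm1⟩ := ZMod.natCast_zmod_surjective (n := n) y.1
  obtain ⟨m2, hm2⟩ := ZMod.natCast_zmod_surjective (n := n) y.2.1
  obtain ⟨m3, hm3⟩ := ZMod.natCast_zmod_surjective (n := n) y.2.2.1
  obtain ⟨m4, hm4⟩ := ZMod.natCast_zmod_surjective (n := n) y.2.2.2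
  have r1 := reach_smul n _ (cycE1 n) m1 (0 : NQuad n)
  have r2 := reach_smul n _ (cycE2 n) m2 (0 + m1 • castQuad n ((1,0,0,0) : ZQuad))
  have r3 := reach_smul n _ (cycE3 n) m3
      (0 + m1 • castQuad n ((1,0,0,0) : ZQuad) + m2 • castQuad n ((0,1,0,0) : ZQuad))
  have r4 := reach_smul n _ (cycE4 n) m4
      (0 + m1 • castQuad n ((1,0,0,0) : ZQuad) + m2 • castQuad n ((0,1,0,0) : ZQuad)
        + m3 • castQuad n ((0,0,1,0) : ZQuad))
  have hfin : (0 : NQuad n) + m1 • castQuad n ((1,0,0,0) : ZQuad)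
      + m2 • castQuad n ((0,1,0,0) : ZQuad) + m3 • castQuad n ((0,0,1,0) : ZQuad)
      + m4 • castQuad n ((0,0,0,1) : ZQuad) = y := by
    obtain ⟨y1, y2, y3, y4⟩ := y
    simp only [Prod.ext_iff, Prod.mk_add_mk, Prod.smul_mk, castQuad] at *
    constructor
    · simpa using hm1
    constructor
    · simpa using hm2
    constructor
    · simpa using hm3
    · simpa using hm4
  have := ((r1.trans r2).trans r3).trans r4
  rwa [hfin] at this

lemma rmul_ab_ne : ∀ u : RSet, rmul aR u ≠ rmul bR u := by decide
lemma rmul_ac_ne : ∀ u : RSet, rmul aR u ≠ rmul cR u := by decide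
lemma rmul_bc_ne : ∀ u : RSet, rmul bR u ≠ rmul cR u := by decide
lemma rmul_self_ne : ∀ (s u : RSet), s ≠ idR → u ≠ rmul s u := by decide


lemma neighborSet_eq (n : ℕ) (u : RSet) (x : NQuad n) :
    (Lam n).neighborSet (u, x) =
      {(rmul aR u, x + castQuad n (zetaZ u (rmul aR u))),
       (rmul bR u, x + castQuad n (zetaZ u (rmul bR u))),
       (rmul cR u, x + castQuad n (zetaZ u (rmul cR u)))} := by
  ext ⟨v, y⟩
  simp only [SimpleGraph.mem_neighborSet, Lam, MK, Set.mem_insert_iff,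
    Set.mem_singleton_iff, Prod.mk.injEq]
  constructor
  · rintro ⟨⟨hne, h | h | h⟩, hy⟩ <;> subst h <;> subst hy <;> simp
  · rintro (⟨hv, hy⟩ | ⟨hv, hy⟩ | ⟨hv, hy⟩) <;> subst hv <;> subst hy <;>
      exact ⟨⟨rmul_self_ne _ u (by decide), by simp⟩, rfl⟩

/-- For `n ≥ 1`, the covering graph `Λ_n` is a connected cubic graph on `16n⁴` vertices. -/
theorem statement7 (n : ℕ) (hn : 1 ≤ n) :
    (Lam n).Connected ∧ (∀ p : RSet × NQuad n, Nat.card ((Lam n).neighborSet p) = 3) ∧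
    Nat.card (RSet × NQuad n) = 16 * n ^ 4 := by
  have hnz : NeZero n := ⟨by omega⟩
  refine ⟨?_, ?_, ?_⟩
  · have hne : Nonempty (RSet × NQuad n) := ⟨(idR, 0)⟩
    refine ⟨?_⟩
    rintro ⟨u, x⟩ ⟨v, y⟩
    obtain ⟨w1, h1⟩ := toid n u x
    obtain ⟨w2, h2⟩ := toid n v y
    exact h1.trans (((reach_zero_all n w1).symm.trans (reach_zero_all n w2)).trans h2.symm)
  · rintro ⟨u, x⟩
    rw [neighborSet_eq, Nat.card_coe_set_eq,
      Set.ncard_insert_of_notMem ?h1 ((Set.finite_singleton _).insert _), Set.ncard_pair ?h2]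
    case h1 =>
      simp only [Set.mem_insert_iff, Set.mem_singleton_iff, Prod.mk.injEq, not_or]
      refine ⟨fun h => ?_, fun h => ?_⟩
      · exact rmul_ab_ne u h.1
      · exact rmul_ac_ne u h.1
    case h2 =>
      intro h
      exact rmul_bc_ne u (congrArg Prod.fst h)
  · rw [Nat.card_prod]
    have h1 : Nat.card RSet = 16 := by
      simp [Nat.card_eq_fintype_card]
    have h2 : Nat.card (NQuad n) = n ^ 4 := by
      rw [Nat.card_prod, Nat.card_prod, Nat.card_prod, Nat.card_zmod]
      ring
    rw [h1, h2]
end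

section
/- Let Λ be a finite connected 3-regular simple graph admitting a subgroup B ≤ Aut(Λ) that acts sharply transitively on the 2-arcs of Λ, and suppose d := dim_{F_2} E_1(Λ) ≥ 2. Then the lexicographic product Γ = Λ[K̄_2] admits a subgroup G ≤ Aut(Γ) acting transitively on the arcs of Γ such that every vertex-stabiliser G_v has order 3·2^{d} and the local action G_v^{Γ(v)} is permutation isomorphic to S_4(6d). -/
/-- A permutation `g` of the vertex set is an automorphism of the graph `Γ`. -/
def IsGraphAut {V : Type*} (Γ : SimpleGraph V) (g : Equiv.Perm V) : Prop :=
  ∀ u v : V, Γ.Adj (g u) (g v) ↔ Γ.Adj u v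

/-- The subgroup `G` acts transitively on the arcs of `Γ`. -/
def ArcTransitiveOn {V : Type*} (Γ : SimpleGraph V) (G : Subgroup (Equiv.Perm V)) : Prop :=
  ∀ u v u' v' : V, Γ.Adj u v → Γ.Adj u' v' → ∃ g ∈ G, g u = u' ∧ g v = v'

/-- `G` acts sharply transitively (transitively and freely) on the arcs of `Γ`. -/
def SharplyArcTransitiveOn {V : Type*} (Γ : SimpleGraph V)
    (G : Subgroup (Equiv.Perm V)) : Prop :=
  ∀ u v u' v' : V, Γ.Adj u v → Γ.Adj u' v' →
    ∃! g : G, (g : Equiv.Perm V) u = u' ∧ (g : Equiv.Perm V) v = v'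

/-- `G` acts sharply transitively (transitively and freely) on the 2-arcs of `Γ`. -/
def SharplyTwoArcTransitiveOn {V : Type*} (Γ : SimpleGraph V)
    (G : Subgroup (Equiv.Perm V)) : Prop :=
  ∀ u v w u' v' w' : V, Γ.Adj u v → Γ.Adj v w → u ≠ w →
    Γ.Adj u' v' → Γ.Adj v' w' → u' ≠ w' →
      ∃! g : G, (g : Equiv.Perm V) u = u' ∧ (g : Equiv.Perm V) v = v' ∧
        (g : Equiv.Perm V) w = w'

/-- The local action of `G` at `v`: the set of permutations of the neighbourhood of `v`
induced by elements of the vertex-stabiliser of `v` in `G`. -/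
def localActionSet {V : Type*} (Γ : SimpleGraph V) (G : Subgroup (Equiv.Perm V)) (v : V) :
    Set (Equiv.Perm (Γ.neighborSet v)) :=
  {p | ∃ g ∈ G, g v = v ∧ ∀ u : Γ.neighborSet v, (p u : V) = g (u : V)}

/-- Permutation isomorphism between a set of permutations of `Ω` and a set of
permutations of `Δ`: a bijection `e : Ω ≃ Δ` conjugating the first set onto the second. -/
def PermIsomorphic {Ω Δ : Type*} (P : Set (Equiv.Perm Ω)) (Q : Set (Equiv.Perm Δ)) : Prop :=
  ∃ e : Ω ≃ Δ, ∀ q : Equiv.Perm Δ, q ∈ Q ↔ ∃ p ∈ P, ∀ ω : Ω, e (p ω) = q (e ω)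

open scoped Classical in
/-- The 1-eigenspace of the adjacency matrix of `Λ` over `F₂`. -/
noncomputable def eigOne {V : Type*} [Fintype V] (Λ : SimpleGraph V) :
    Submodule (ZMod 2) (V → ZMod 2) :=
  LinearMap.ker (Matrix.toLin' (Λ.adjMatrix (ZMod 2)) - LinearMap.id)

/-- The lexicographic product `Λ[K̄₂]`: vertex set `V(Λ) × F₂`, with `(u,i)` adjacent to
`(v,j)` iff `u` is adjacent to `v` in `Λ`. -/
def lexK2 {V : Type*} (Λ : SimpleGraph V) : SimpleGraph (V × ZMod 2) where
  Adj p q := Λ.Adj p.1 q.1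
  symm := ⟨fun _ _ h => Λ.adj_symm h⟩
  loopless := ⟨fun p h => Λ.ne_of_adj h rfl⟩

/-- The subgroup `⟨(1 2),(3 4)⟩` of `Sym(4)` (0-indexed: `⟨(0 1),(2 3)⟩`). -/
def Hd : Subgroup (Equiv.Perm (Fin 4)) :=
  Subgroup.closure {Equiv.swap 0 1, Equiv.swap 2 3}

/-- `S₄(6d)`: the image of `Sym(4)` in the symmetric group on the 6 left cosets of
`⟨(1 2),(3 4)⟩`, under the left multiplication action. -/
def S46d : Subgroup (Equiv.Perm (Equiv.Perm (Fin 4) ⧸ Hd)) :=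
  (MulAction.toPermHom (Equiv.Perm (Fin 4)) (Equiv.Perm (Fin 4) ⧸ Hd)).range

open Equiv in
def HdSet : Finset (Equiv.Perm (Fin 4)) := {1, swap 0 1, swap 2 3, swap 0 1 * swap 2 3}
def HdK : Subgroup (Equiv.Perm (Fin 4)) where
  carrier := ↑HdSet
  one_mem' := by decide
  mul_mem' := by decide
  inv_mem' := by decide
lemma mem_HdK {g : Equiv.Perm (Fin 4)} : g ∈ HdK ↔ g ∈ HdSet := Iff.rfl
lemma Hd_eq : Hd = HdK := by
  apply le_antisymm
  · rw [Hd, Subgroup.closure_le]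
    intro g hg
    rcases hg with h | h <;> subst h <;> exact mem_HdK.mpr (by decide)
  · intro g hg
    have h2 : g ∈ HdSet := mem_HdK.mp hg
    fin_cases h2
    · exact one_mem _
    · exact Subgroup.subset_closure (by simp)
    · exact Subgroup.subset_closure (by simp)
    · exact mul_mem (Subgroup.subset_closure (by simp)) (Subgroup.subset_closure (by simp))
instance : DecidablePred (· ∈ Hd) := fun g =>
  decidable_of_iff (g ∈ HdSet) (by rw [Hd_eq]; exact Iff.rfl)

instance (priority := 2000) HdRelDec : DecidableRel (QuotientGroup.leftRel Hd).r :=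
  fun a b => decidable_of_iff (a⁻¹ * b ∈ Hd) (QuotientGroup.leftRel_apply).symm
instance (priority := 2000) : DecidableEq (Equiv.Perm (Fin 4) ⧸ Hd) :=
  @Quotient.decidableEq _ (QuotientGroup.leftRel Hd) HdRelDec
instance (priority := 2000) : Fintype (Equiv.Perm (Fin 4) ⧸ Hd) :=
  @Quotient.fintype _ _ (QuotientGroup.leftRel Hd) HdRelDec

/-- The model "twist" permutation of `Fin 3 × ZMod 2`. -/
def twist3 (σ : Equiv.Perm (Fin 3)) (y : Fin 3 → ZMod 2) : Equiv.Perm (Fin 3 × ZMod 2) where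
  toFun p := (σ p.1, p.2 + y p.1)
  invFun p := (σ.symm p.1, p.2 + y (σ.symm p.1))
  left_inv p := by
    cases p with
    | mk k j => simp [add_assoc, CharTwo.add_self_eq_zero]
  right_inv p := by
    cases p with
    | mk k j => simp [add_assoc, CharTwo.add_self_eq_zero]

open Equiv in
/-- Coset representatives realising the permutation isomorphism. -/
def repE : Fin 3 × ZMod 2 → Equiv.Perm (Fin 4)
  | (0, j) => if j = 0 then 1 else swap 0 2 * swap 1 3
  | (1, j) => if j = 0 then swap 1 2 else swap 0 1 * swap 1 2 * swap 1 3
  | (2, j) => if j = 0 then swap 1 2 * swap 1 3 else swap 0 1 * swap 1 2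

def e0fun : Fin 3 × ZMod 2 → Equiv.Perm (Fin 4) ⧸ Hd := fun w => QuotientGroup.mk (repE w)

lemma e0_bij : Function.Bijective e0fun := by decide

noncomputable def e0 : (Fin 3 × ZMod 2) ≃ (Equiv.Perm (Fin 4) ⧸ Hd) := Equiv.ofBijective _ e0_bij

lemma claimB : ∀ s : Equiv.Perm (Fin 4), ∃ σ : Equiv.Perm (Fin 3), ∃ y : Fin 3 → ZMod 2,
    y 0 + y 1 + y 2 = 0 ∧ ∀ ω : Fin 3 × ZMod 2,
      e0fun (twist3 σ y ω) = MulAction.toPermHom (Equiv.Perm (Fin 4))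
        (Equiv.Perm (Fin 4) ⧸ Hd) s (e0fun ω) := by decide

lemma claimA : ∀ σ : Equiv.Perm (Fin 3), ∀ y : Fin 3 → ZMod 2,
    y 0 + y 1 + y 2 = 0 → ∃ s : Equiv.Perm (Fin 4), ∀ ω : Fin 3 × ZMod 2,
      e0fun (twist3 σ y ω) = MulAction.toPermHom (Equiv.Perm (Fin 4))
        (Equiv.Perm (Fin 4) ⧸ Hd) s (e0fun ω) := by decide

lemma model_iff (q : Equiv.Perm (Equiv.Perm (Fin 4) ⧸ Hd)) :
    q ∈ S46d ↔ ∃ σ : Equiv.Perm (Fin 3), ∃ y : Fin 3 → ZMod 2, y 0 + y 1 + y 2 = 0 ∧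
      ∀ m : Fin 3 × ZMod 2, e0 (twist3 σ y m) = q (e0 m) := by
  constructor
  · rintro ⟨s, hs⟩
    obtain ⟨σ, y, h0, hint⟩ := claimB s
    exact ⟨σ, y, h0, fun m => by rw [← hs]; exact hint m⟩
  · rintro ⟨σ, y, h0, hint⟩
    obtain ⟨s, hs⟩ := claimA σ y h0
    refine ⟨s, ?_⟩
    apply Equiv.ext
    intro δ
    obtain ⟨m, rfl⟩ := e0.surjective δ
    rw [← hint m]
    exact (hs m).symm
section Graph
variable {V : Type*} [Fintype V] (Λ : SimpleGraph V)

open scoped Classical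

lemma mem_eigOne_iff (x : V → ZMod 2) :
    x ∈ eigOne Λ ↔ ∀ v : V, ∑ u ∈ Λ.neighborFinset v, x u = x v := by
  rw [eigOne, LinearMap.mem_ker]
  constructor
  · intro h v
    have := congrFun h v
    simp only [LinearMap.sub_apply, LinearMap.id_apply, Matrix.toLin'_apply,
      Pi.sub_apply, Pi.zero_apply, sub_eq_zero] at this
    rw [← this, SimpleGraph.adjMatrix_mulVec_apply]
  · intro h
    funext v
    simp only [LinearMap.sub_apply, LinearMap.id_apply, Matrix.toLin'_apply,
      Pi.sub_apply, Pi.zero_apply, sub_eq_zero]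
    rw [SimpleGraph.adjMatrix_mulVec_apply]
    exact h v

variable {Λ}

lemma comp_mem_eigOne {x : V → ZMod 2} (hx : x ∈ eigOne Λ) {b : Equiv.Perm V}
    (hb : IsGraphAut Λ b) : (fun v => x (b v)) ∈ eigOne Λ := by
  rw [mem_eigOne_iff] at hx ⊢
  intro v
  have : ∑ u ∈ Λ.neighborFinset v, x (b u) = ∑ u ∈ Λ.neighborFinset (b v), x u := by
    apply Finset.sum_nbij' (fun u => b u) (fun u => b.symm u)
    · intro a ha
      rw [SimpleGraph.mem_neighborFinset] at ha ⊢
      exact (hb v a).mpr ha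
    · intro a ha
      rw [SimpleGraph.mem_neighborFinset] at ha ⊢
      have := (hb v (b.symm a)).mp
      simp only [Equiv.apply_symm_apply] at this
      exact this ha
    · intro a _; simp
    · intro a _; simp
    · intro a _; rfl
  rw [this, hx (b v)]

lemma one_mem_eigOne (hreg : ∀ v : V, Nat.card (Λ.neighborSet v) = 3) :
    (fun _ => (1 : ZMod 2)) ∈ eigOne Λ := by
  rw [mem_eigOne_iff]
  intro v
  rw [Finset.sum_const, nsmul_eq_mul, mul_one]
  have hc : (Λ.neighborFinset v).card = 3 := by
    rw [SimpleGraph.neighborFinset, Set.toFinset_card, ← Nat.card_eq_fintype_card, hreg v]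
  rw [hc]; decide

/-- The basic twisted permutation of `V × ZMod 2`. -/
def twist (b : Equiv.Perm V) (x : V → ZMod 2) : Equiv.Perm (V × ZMod 2) where
  toFun p := (b p.1, p.2 + x p.1)
  invFun p := (b.symm p.1, p.2 + x (b.symm p.1))
  left_inv p := by cases p; simp [add_assoc, CharTwo.add_self_eq_zero]
  right_inv p := by cases p; simp [add_assoc, CharTwo.add_self_eq_zero]

@[simp] lemma twist_apply (b : Equiv.Perm V) (x : V → ZMod 2) (p : V × ZMod 2) :
    twist b x p = (b p.1, p.2 + x p.1) := rfl

variable (Λ) in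
/-- The arc-transitive group on the lexicographic product. -/
noncomputable def bigG (B : Subgroup (Equiv.Perm V)) (hBaut : ∀ g ∈ B, IsGraphAut Λ g) :
    Subgroup (Equiv.Perm (V × ZMod 2)) where
  carrier := {g | ∃ b ∈ B, ∃ x ∈ eigOne Λ, g = twist b x}
  one_mem' := ⟨1, one_mem B, 0, zero_mem _, by ext p <;> simp [twist]⟩
  mul_mem' := by
    rintro g g' ⟨b, hb, x, hx, rfl⟩ ⟨b', hb', x', hx', rfl⟩
    refine ⟨b * b', mul_mem hb hb', (fun v => x' v + x (b' v)),
      add_mem hx' (comp_mem_eigOne hx (hBaut b' hb')), ?_⟩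
    ext p <;> simp [twist, add_assoc]
  inv_mem' := by
    rintro g ⟨b, hb, x, hx, rfl⟩
    refine ⟨b⁻¹, inv_mem hb, (fun v => x (b⁻¹ v)),
      comp_mem_eigOne hx (hBaut b⁻¹ (inv_mem hb)), ?_⟩
    ext p
    · simp [twist]
    · simp [twist]

lemma mem_bigG {B : Subgroup (Equiv.Perm V)} {hBaut : ∀ g ∈ B, IsGraphAut Λ g}
    {g : Equiv.Perm (V × ZMod 2)} :
    g ∈ bigG Λ B hBaut ↔ ∃ b ∈ B, ∃ x ∈ eigOne Λ, g = twist b x := Iff.rfl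

end Graph

section Graph2
open scoped Classical
variable {V : Type*} [Fintype V] {Λ : SimpleGraph V}

/-- An equivalence between the neighbourhood of a vertex of a cubic graph and `Fin 3`. -/
noncomputable def nbr (hreg : ∀ v : V, Nat.card (Λ.neighborSet v) = 3) (v : V) :
    (Λ.neighborSet v) ≃ Fin 3 :=
  Fintype.equivFinOfCardEq (by rw [← Nat.card_eq_fintype_card, hreg v])

lemma fin3_cases (k : Fin 3) : k = 0 ∨ k = 1 ∨ k = 2 := by omega

lemma zmod2_cases (j : ZMod 2) : j = 0 ∨ j = 1 := by revert j; decide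

variable (hreg : ∀ v : V, Nat.card (Λ.neighborSet v) = 3)
  {B : Subgroup (Equiv.Perm V)} (hBaut : ∀ g ∈ B, IsGraphAut Λ g)
  (hBt : SharplyTwoArcTransitiveOn Λ B)

include hreg in
lemma exists_third {v u : V} (h : Λ.Adj v u) : ∃ w : V, Λ.Adj v w ∧ w ≠ u := by
  set ν := nbr hreg v
  by_cases h0 : (ν.symm 0 : V) = u
  · refine ⟨ν.symm 1, (ν.symm 1).2, ?_⟩
    rw [← h0]
    intro he
    have : ν.symm 1 = ν.symm 0 := Subtype.ext he
    simpa using ν.symm.injective this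
  · exact ⟨ν.symm 0, (ν.symm 0).2, h0⟩

include hreg hBt in
lemma B_arc_trans {u v u' v' : V} (h : Λ.Adj u v) (h' : Λ.Adj u' v') :
    ∃ b ∈ B, b u = u' ∧ b v = v' := by
  obtain ⟨w, hw, hwu⟩ := exists_third hreg h.symm
  obtain ⟨w', hw', hwu'⟩ := exists_third hreg h'.symm
  obtain ⟨g, ⟨hg1, hg2, _⟩, -⟩ := hBt u v w u' v' w' h hw (fun he => hwu he.symm)
    h' hw' (fun he => hwu' he.symm)
  exact ⟨g, g.2, hg1, hg2⟩

include hreg hBt in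
lemma B_vertex_trans (a v : V) : ∃ b ∈ B, b a = v := by
  have ha : Λ.Adj a ((nbr hreg a).symm 0 : V) := ((nbr hreg a).symm 0).2
  have hv : Λ.Adj v ((nbr hreg v).symm 0 : V) := ((nbr hreg v).symm 0).2
  obtain ⟨b, hb, h1, _⟩ := B_arc_trans hreg hBt ha hv
  exact ⟨b, hb, h1⟩

include hreg hBaut hBt in
lemma Bv_surj (v : V) (τ : Equiv.Perm (Λ.neighborSet v)) :
    ∃ b ∈ B, b v = v ∧ ∀ n : Λ.neighborSet v, b (n : V) = (τ n : V) := by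
  set ν := nbr hreg v with hν
  set n0 : Λ.neighborSet v := ν.symm 0
  set n1 : Λ.neighborSet v := ν.symm 1
  set n2 : Λ.neighborSet v := ν.symm 2
  have hsymm_inj : Function.Injective (fun k : Fin 3 => ((ν.symm k : Λ.neighborSet v) : V)) :=
    fun a b hab => by simpa using ν.symm.injective (Subtype.ext hab)
  have hcoe : ∀ m n : Λ.neighborSet v, (m : V) = (n : V) → m = n := fun m n => Subtype.ext
  have h01 : (n0 : V) ≠ (n1 : V) := fun he => by simpa using hsymm_inj he
  have hτ01 : ((τ n0) : V) ≠ ((τ n1) : V) := fun he => by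
    have := τ.injective (hcoe _ _ he)
    have : (n0 : V) = (n1 : V) := congrArg _ this
    exact h01 this
  obtain ⟨g, ⟨hg0, hgv, hg1⟩, -⟩ := hBt (n0 : V) v (n1 : V) ((τ n0) : V) v ((τ n1) : V)
    (Λ.adj_symm n0.2) n1.2 h01 (Λ.adj_symm (τ n0).2) (τ n1).2 hτ01
  refine ⟨g, g.2, hgv, ?_⟩
  -- g maps neighbours to neighbours
  have hmap : ∀ n : Λ.neighborSet v, Λ.Adj v ((g : Equiv.Perm V) (n : V)) := by
    intro n
    have := ((hBaut g g.2) v (n : V)).mpr n.2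
    rwa [hgv] at this
  -- the image of n2 is forced
  have hg2 : (g : Equiv.Perm V) (n2 : V) = ((τ n2) : V) := by
    set m : Λ.neighborSet v := ⟨(g : Equiv.Perm V) (n2 : V), hmap n2⟩
    have hm0 : m ≠ τ n0 := by
      intro he
      have : (g : Equiv.Perm V) (n2 : V) = (g : Equiv.Perm V) (n0 : V) := by
        rw [hg0]; exact congrArg Subtype.val he
      have := hsymm_inj ((g : Equiv.Perm V).injective this)
      exact absurd this (by decide)
    have hm1 : m ≠ τ n1 := by
      intro he
      have : (g : Equiv.Perm V) (n2 : V) = (g : Equiv.Perm V) (n1 : V) := by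
        rw [hg1]; exact congrArg Subtype.val he
      have := hsymm_inj ((g : Equiv.Perm V).injective this)
      exact absurd this (by decide)
    have hm2 : m = τ n2 := by
      have h0' : τ.symm m ≠ n0 := fun he => hm0 (by rw [← he]; simp)
      have h1' : τ.symm m ≠ n1 := fun he => hm1 (by rw [← he]; simp)
      have hk0 : ν (τ.symm m) ≠ 0 := fun he => h0' (by
        have := congrArg ν.symm he
        simpa [hν] using this)
      have hk1 : ν (τ.symm m) ≠ 1 := fun he => h1' (by
        have := congrArg ν.symm he
        simpa [hν] using this)
      have hk2 : ν (τ.symm m) = 2 := by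
        rcases fin3_cases (ν (τ.symm m)) with h | h | h
        · exact absurd h hk0
        · exact absurd h hk1
        · exact h
      have : τ.symm m = n2 := by
        have := congrArg ν.symm hk2
        simpa [hν] using this
      rw [← this]; simp
    exact congrArg Subtype.val hm2
  -- now all three cases
  intro n
  rcases fin3_cases (ν n) with h | h | h
  · have hn : n = n0 := by rw [show n0 = ν.symm 0 from rfl, ← h]; simp
    rw [hn]; exact hg0
  · have hn : n = n1 := by rw [show n1 = ν.symm 1 from rfl, ← h]; simp
    rw [hn]; exact hg1
  · have hn : n = n2 := by rw [show n2 = ν.symm 2 from rfl, ← h]; simp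
    rw [hn]; exact hg2
end Graph2

section Graph3
open scoped Classical
variable {V : Type*} [Fintype V] {Λ : SimpleGraph V}

lemma helper2 : ∀ t : Fin 3 → ZMod 2, t 0 + t 1 + t 2 = 0 → ∀ i, t i = 1 →
    ∃ j, j ≠ i ∧ t j = 1 ∧ ∀ k, k ≠ i → k ≠ j → t k = 0 := by decide

lemma sum_nbrs (x : V → ZMod 2) (v : V) :
    ∑ u ∈ Λ.neighborFinset v, x u = ∑ n : Λ.neighborSet v, x n :=
  Finset.sum_subtype _ (fun u => Λ.mem_neighborFinset v u) x

lemma walk_diff {x : V → ZMod 2} {u w : V} (p : Λ.Walk u w) (h : x u ≠ x w) :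
    ∃ a c, Λ.Adj a c ∧ x a ≠ x c := by
  induction p with
  | nil => exact absurd rfl h
  | @cons u v w h' p ih =>
    by_cases he : x u = x v
    · exact ih (fun hvw => h (he.trans hvw))
    · exact ⟨u, v, h', he⟩

variable (hconn : Λ.Connected) (hd : 2 ≤ Module.finrank (ZMod 2) (eigOne Λ))
  (hreg : ∀ v : V, Nat.card (Λ.neighborSet v) = 3)
  {B : Subgroup (Equiv.Perm V)} (hBaut : ∀ g ∈ B, IsGraphAut Λ g)
  (hBt : SharplyTwoArcTransitiveOn Λ B)

include hconn hd in
lemma exists_nonconst : ∃ x ∈ eigOne Λ, ∃ a c, Λ.Adj a c ∧ x a = 0 ∧ x c = 1 := by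
  obtain ⟨v0⟩ := hconn.nonempty
  -- step 1 : a nonconstant eigenvector
  have hstep1 : ∃ x ∈ eigOne Λ, ∃ u w : V, x u ≠ x w := by
    by_contra hcon
    push_neg at hcon
    have hle : eigOne Λ ≤ Submodule.span (ZMod 2) {(fun _ => (1 : ZMod 2) : V → ZMod 2)} := by
      intro x hx
      rw [Submodule.mem_span_singleton]
      refine ⟨x v0, funext fun u => ?_⟩
      have := hcon x hx u v0
      simp [this]
    have h1ne : (fun _ => (1 : ZMod 2) : V → ZMod 2) ≠ 0 := by
      intro h
      have := congrFun h v0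
      simp at this
    have := Submodule.finrank_mono hle
    rw [finrank_span_singleton h1ne] at this
    omega
  obtain ⟨x, hx, u, w, hne⟩ := hstep1
  obtain ⟨p⟩ := hconn.preconnected u w
  obtain ⟨a, c, hac, hne'⟩ := walk_diff p hne
  rcases zmod2_cases (x a) with h0 | h0
  · refine ⟨x, hx, a, c, hac, h0, ?_⟩
    rcases zmod2_cases (x c) with h1 | h1
    · exact absurd (h0.trans h1.symm) hne'
    · exact h1
  · refine ⟨x, hx, c, a, hac.symm, ?_, h0⟩
    rcases zmod2_cases (x c) with h1 | h1
    · exact h1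
    · exact absurd (h0.trans h1.symm) hne'

include hconn hd hreg hBaut hBt in
lemma eval_lemma (v : V) (y : Λ.neighborSet v → ZMod 2) (hy : ∑ n, y n = 0) :
    ∃ x ∈ eigOne Λ, x v = 0 ∧ ∀ n : Λ.neighborSet v, x (n : V) = y n := by
  by_cases hy0 : ∀ n, y n = 0
  · exact ⟨0, zero_mem _, rfl, fun n => (hy0 n).symm ▸ rfl⟩
  push_neg at hy0
  obtain ⟨n1, hn1⟩ := hy0
  have hn1' : y n1 = 1 := by rcases zmod2_cases (y n1) with h | h; exact absurd h hn1; exact h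
  set ν := nbr hreg v with hν
  have hyt : y (ν.symm 0) + y (ν.symm 1) + y (ν.symm 2) = 0 := by
    have h5 := Equiv.sum_comp ν.symm y
    rw [Fin.sum_univ_three] at h5
    rw [h5]; exact hy
  obtain ⟨j, hji, htj, hzero⟩ := helper2 (fun k => y (ν.symm k)) hyt (ν n1) (by simp [hn1'])
  set n2 : Λ.neighborSet v := ν.symm j with hn2def
  have hn21 : n2 ≠ n1 := fun he => hji (by rw [← he]; simp [hn2def])
  have hyn2 : y n2 = 1 := htj
  have hyother : ∀ n : Λ.neighborSet v, n ≠ n1 → n ≠ n2 → y n = 0 := by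
    intro n hni hnj
    have h1 : ν n ≠ ν n1 := fun he => hni (ν.injective he)
    have h2 : ν n ≠ j := fun he => hnj (by rw [hn2def, ← he]; simp)
    have := hzero (ν n) h1 h2
    simpa using this
  -- source side
  obtain ⟨x₀, hx₀, a, c, hac, hxa, hxc⟩ := exists_nonconst hconn hd
  set μ := nbr hreg a with hμ
  have hsum : x₀ ((μ.symm 0 : Λ.neighborSet a) : V) + x₀ ((μ.symm 1 : Λ.neighborSet a) : V)
      + x₀ ((μ.symm 2 : Λ.neighborSet a) : V) = 0 := by
    have h1 : ∑ m ∈ Λ.neighborFinset a, x₀ m = x₀ a := (mem_eigOne_iff Λ x₀).mp hx₀ a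
    rw [sum_nbrs, ← Equiv.sum_comp μ.symm (fun n : Λ.neighborSet a => x₀ (n : V)),
      Fin.sum_univ_three] at h1
    rw [h1, hxa]
  set ca : Λ.neighborSet a := ⟨c, hac⟩ with hca
  obtain ⟨j', hj'ne, hsj', hszero⟩ := helper2 (fun k => x₀ ((μ.symm k : Λ.neighborSet a) : V))
    hsum (μ ca) (by simp [hca, hxc])
  set c2 : Λ.neighborSet a := μ.symm j' with hc2def
  have hc2c : (c2 : V) ≠ c := by
    intro he
    have : c2 = ca := Subtype.ext he
    exact hj'ne (by rw [← this, hc2def]; simp)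
  have hxc2 : x₀ (c2 : V) = 1 := hsj'
  have hsother : ∀ m : Λ.neighborSet a, (m : V) ≠ c → m ≠ c2 → x₀ (m : V) = 0 := by
    intro m hmc hmc2
    have h1 : μ m ≠ μ ca := fun he => hmc (congrArg Subtype.val (μ.injective he))
    have h2 : μ m ≠ j' := fun he => hmc2 (by rw [hc2def, ← he]; simp)
    have := hszero (μ m) h1 h2
    simpa using this
  -- transport with an element of B
  have hadj_ac2 : Λ.Adj a (c2 : V) := c2.2
  have hcc2 : c ≠ (c2 : V) := fun he => hc2c he.symm
  have hn1v : Λ.Adj (n1 : V) v := Λ.adj_symm n1.2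
  have hn12 : (n1 : V) ≠ (n2 : V) := fun he => hn21 (Subtype.ext he.symm)
  obtain ⟨g, ⟨hgc, hga, hgc2⟩, -⟩ := hBt c a (c2 : V) (n1 : V) v (n2 : V)
    hac.symm hadj_ac2 hcc2 hn1v n2.2 hn12
  refine ⟨fun u => x₀ (((g : Equiv.Perm V))⁻¹ u), comp_mem_eigOne hx₀
    (hBaut _ (inv_mem g.2)), ?_, ?_⟩
  · show x₀ (((g : Equiv.Perm V))⁻¹ v) = 0
    rw [show ((g : Equiv.Perm V))⁻¹ v = a by rw [← hga]; simp, hxa]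
  · intro n
    show x₀ (((g : Equiv.Perm V))⁻¹ (n : V)) = y n
    by_cases h1 : n = n1
    · rw [h1, show ((g : Equiv.Perm V))⁻¹ ((n1 : Λ.neighborSet v) : V) = c by rw [← hgc]; simp,
        hxc, hn1']
    by_cases h2 : n = n2
    · rw [h2, show ((g : Equiv.Perm V))⁻¹ ((n2 : Λ.neighborSet v) : V) = (c2 : V)
        by rw [← hgc2]; simp, hxc2, hyn2]
    · have hmem : Λ.Adj a (((g : Equiv.Perm V))⁻¹ (n : V)) := by
        have haut := hBaut _ (inv_mem g.2 : (g : Equiv.Perm V)⁻¹ ∈ B)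
        have := (haut v (n : V)).mpr n.2
        rwa [show ((g : Equiv.Perm V))⁻¹ v = a by rw [← hga]; simp] at this
      set m : Λ.neighborSet a := ⟨((g : Equiv.Perm V))⁻¹ (n : V), hmem⟩ with hm
      have hmc : (m : V) ≠ c := by
        intro he
        apply h1
        apply Subtype.ext
        have := congrArg (g : Equiv.Perm V) he
        simpa [hgc, hm] using this
      have hmc2 : m ≠ c2 := by
        intro he
        apply h2
        apply Subtype.ext
        have := congrArg (g : Equiv.Perm V) (congrArg Subtype.val he)
        simpa [hgc2, hm] using this
      have := hsother m hmc hmc2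
      rw [show x₀ (((g : Equiv.Perm V))⁻¹ (n : V)) = x₀ (m : V) from rfl, this,
        hyother n h1 h2]

include hconn hd hreg hBaut hBt in
lemma eval_edge {u v : V} (h : Λ.Adj u v) (i j : ZMod 2) :
    ∃ x ∈ eigOne Λ, x u = i ∧ x v = j := by
  have key : ∀ {a b : V}, Λ.Adj a b → ∃ x ∈ eigOne Λ, x a = 0 ∧ x b = 1 := by
    intro a b hab
    have hbmem : b ∈ Λ.neighborSet a := hab
    obtain ⟨w, hw, hwb⟩ := exists_third hreg hab
    set nb : Λ.neighborSet a := ⟨b, hbmem⟩ with hnb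
    set nw : Λ.neighborSet a := ⟨w, hw⟩ with hnw
    have hnbw : nb ≠ nw := fun he => hwb (congrArg Subtype.val he).symm
    set y : Λ.neighborSet a → ZMod 2 :=
      fun n => (if n = nb then 1 else 0) + (if n = nw then 1 else 0) with hy
    have hysum : ∑ n, y n = 0 := by
      rw [hy]
      rw [Finset.sum_add_distrib]
      rw [Finset.sum_ite_eq' Finset.univ nb (fun _ => (1 : ZMod 2)),
        Finset.sum_ite_eq' Finset.univ nw (fun _ => (1 : ZMod 2))]
      simp
      decide
    obtain ⟨x, hx, hxa, hxn⟩ := eval_lemma hconn hd hreg hBaut hBt a y hysum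
    refine ⟨x, hx, hxa, ?_⟩
    have := hxn nb
    rw [hy] at this
    simp [hnbw] at this
    exact this
  rcases zmod2_cases i with hi | hi <;> rcases zmod2_cases j with hj | hj <;> subst hi hj
  · exact ⟨0, zero_mem _, rfl, rfl⟩
  · exact key h
  · obtain ⟨x, hx, h1, h2⟩ := key h.symm
    exact ⟨x, hx, h2, h1⟩
  · exact ⟨(fun _ => 1), one_mem_eigOne hreg, rfl, rfl⟩
end Graph3

section Graph4
open scoped Classical
variable {V : Type*} [Fintype V] {Λ : SimpleGraph V}

variable (Λ) in
/-- Evaluation of eigenvectors at a vertex, as a linear map. -/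
noncomputable def evLin (v : V) : (eigOne Λ) →ₗ[ZMod 2] ZMod 2 :=
  (LinearMap.proj v).comp (eigOne Λ).subtype

@[simp] lemma evLin_apply (v : V) (x : eigOne Λ) : evLin Λ v x = (x : V → ZMod 2) v := rfl

variable (hreg : ∀ v : V, Nat.card (Λ.neighborSet v) = 3)
  (hconn : Λ.Connected) (hd : 2 ≤ Module.finrank (ZMod 2) (eigOne Λ))
  {B : Subgroup (Equiv.Perm V)} (hBaut : ∀ g ∈ B, IsGraphAut Λ g)
  (hBt : SharplyTwoArcTransitiveOn Λ B)

include hreg in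
lemma evLin_surj (v : V) : Function.Surjective (evLin Λ v) := by
  intro t
  rcases zmod2_cases t with h | h
  · exact ⟨0, by simp [h]⟩
  · exact ⟨⟨fun _ => 1, one_mem_eigOne hreg⟩, by simp [h]⟩

include hreg in
lemma ker_evLin_card (v : V) :
    Nat.card (LinearMap.ker (evLin Λ v)) = 2 ^ (Module.finrank (ZMod 2) (eigOne Λ) - 1) := by
  have hrn := LinearMap.finrank_range_add_finrank_ker (evLin Λ v)
  rw [LinearMap.range_eq_top.mpr (evLin_surj hreg v), finrank_top, Module.finrank_self] at hrn
  have hcard : Fintype.card (LinearMap.ker (evLin Λ v)) =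
      Fintype.card (ZMod 2) ^ Module.finrank (ZMod 2) (LinearMap.ker (evLin Λ v)) :=
    Module.card_eq_pow_finrank
  rw [Nat.card_eq_fintype_card, hcard, ZMod.card]
  congr 1
  omega

lemma card_pairs3 : Nat.card {q : Fin 3 × Fin 3 // q.1 ≠ q.2} = 6 := by
  rw [Nat.card_eq_fintype_card]
  decide

include hreg in
lemma twoArcs_card (v : V) :
    Nat.card {p : V × V // (Λ.Adj v p.1 ∧ Λ.Adj v p.2) ∧ p.1 ≠ p.2} = 6 := by
  set ν := nbr hreg v
  have e1 : {p : V × V // (Λ.Adj v p.1 ∧ Λ.Adj v p.2) ∧ p.1 ≠ p.2} ≃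
      {q : (Λ.neighborSet v) × (Λ.neighborSet v) // q.1 ≠ q.2} :=
    { toFun := fun p => ⟨(⟨p.1.1, p.2.1.1⟩, ⟨p.1.2, p.2.1.2⟩),
        fun he => p.2.2 (congrArg Subtype.val he)⟩
      invFun := fun q => ⟨((q.1.1 : V), (q.1.2 : V)), ⟨⟨q.1.1.2, q.1.2.2⟩,
        fun he => q.2 (Subtype.ext he)⟩⟩
      left_inv := fun p => rfl
      right_inv := fun q => rfl }
  have e2 : {q : (Λ.neighborSet v) × (Λ.neighborSet v) // q.1 ≠ q.2} ≃
      {q : Fin 3 × Fin 3 // q.1 ≠ q.2} := by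
    refine Equiv.subtypeEquiv (Equiv.prodCongr ν ν) ?_
    intro a
    simp only [Equiv.prodCongr_apply, Prod.map_fst, Prod.map_snd]
    exact ⟨fun h he => h (ν.injective he), fun h he => h (congrArg ν he)⟩
  rw [Nat.card_congr (e1.trans e2), card_pairs3]

include hreg hBaut hBt in
lemma stab_card (v : V) (i : ZMod 2) :
    Nat.card ↥(bigG Λ B hBaut ⊓ MulAction.stabilizer (Equiv.Perm (V × ZMod 2)) ((v, i) : V × ZMod 2)) =
      3 * 2 ^ Module.finrank (ZMod 2) (eigOne Λ) := by
  set d := Module.finrank (ZMod 2) (eigOne Λ) with hdd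
  set ν := nbr hreg v with hν
  set n0 : Λ.neighborSet v := ν.symm 0 with hn0
  set n2 : Λ.neighborSet v := ν.symm 1 with hn2
  have hne02 : (n0 : V) ≠ (n2 : V) := by
    intro he
    have := ν.symm.injective (Subtype.ext he)
    simpa [hn0, hn2] using this
  set S := ↥(bigG Λ B hBaut ⊓ MulAction.stabilizer (Equiv.Perm (V × ZMod 2)) ((v, i) : V × ZMod 2))
    with hS
  -- decomposition of elements of the stabilizer
  have decomp : ∀ g : S, ∃ b ∈ B, ∃ x ∈ eigOne Λ, b v = v ∧ x v = 0 ∧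
      (g : Equiv.Perm (V × ZMod 2)) = twist b x := by
    rintro ⟨g, hg⟩
    obtain ⟨hgG, hgstab⟩ := Subgroup.mem_inf.mp hg
    obtain ⟨b, hb, x, hx, rfl⟩ := hgG
    have hfix : twist b x (v, i) = (v, i) := hgstab
    rw [twist_apply] at hfix
    have h1 : b v = v := congrArg Prod.fst hfix
    have h2 : x v = 0 := by
      have := congrArg Prod.snd hfix
      simp only at this
      have : i + x v = i := this
      calc x v = (i + x v) + i := by rw [add_comm i (x v), add_assoc,
            CharTwo.add_self_eq_zero, add_zero]
        _ = i + i := by rw [this]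
        _ = 0 := CharTwo.add_self_eq_zero i
    exact ⟨b, hb, x, hx, h1, h2, rfl⟩
  -- the bijection
  have key : Nat.card S = 6 * 2 ^ (d - 1) := by
    have hb6 := twoArcs_card hreg v
    have hk := ker_evLin_card hreg v
    rw [← hb6, ← hk, ← Nat.card_prod]
    apply Nat.card_congr
    refine Equiv.ofBijective (fun g =>
      ⟨⟨(((g : S) : Equiv.Perm (V × ZMod 2)) ((n0 : V), 0) |>.1,
         ((g : S) : Equiv.Perm (V × ZMod 2)) ((n2 : V), 0) |>.1), by
          obtain ⟨b, hb, x, hx, hbv, hxv, hgt⟩ := decomp g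
          rw [hgt]
          simp only [twist_apply]
          refine ⟨⟨?_, ?_⟩, ?_⟩
          · have := (hBaut b hb v (n0 : V)).mpr n0.2
            rwa [hbv] at this
          · have := (hBaut b hb v (n2 : V)).mpr n2.2
            rwa [hbv] at this
          · exact fun he => hne02 (b.injective he)⟩,
       ⟨⟨fun u => (((g : S) : Equiv.Perm (V × ZMod 2)) (u, 0)).2, by
          obtain ⟨b, hb, x, hx, hbv, hxv, hgt⟩ := decomp g
          have : (fun u => (((g : S) : Equiv.Perm (V × ZMod 2)) (u, 0)).2) = x := by
            funext u; rw [hgt]; simp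
          rw [this]; exact hx⟩, by
          obtain ⟨b, hb, x, hx, hbv, hxv, hgt⟩ := decomp g
          rw [LinearMap.mem_ker]
          show (((g : S) : Equiv.Perm (V × ZMod 2)) (v, 0)).2 = 0
          rw [hgt]; simpa using hxv⟩⟩) ⟨?_, ?_⟩
    · -- injectivity
      intro g g' he
      obtain ⟨b, hb, x, hx, hbv, hxv, hgt⟩ := decomp g
      obtain ⟨b', hb', x', hx', hbv', hxv', hgt'⟩ := decomp g'
      have he0 := congrArg (fun z => z.1.val.1) he
      have he2 := congrArg (fun z => z.1.val.2) he
      have hex := congrArg (fun z => (z.2.val.val : V → ZMod 2)) he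
      simp only at he0 he2 hex
      rw [hgt, hgt'] at he0 he2
      simp only [twist_apply] at he0 he2
      have hxx : x = x' := by
        funext u
        have hu := congrFun hex u
        rw [hgt, hgt'] at hu
        simpa using hu
      have hbb : b = b' := by
        have hadj0 : Λ.Adj (n0 : V) v := Λ.adj_symm n0.2
        obtain ⟨gg, hgg, huniq⟩ := hBt (n0 : V) v (n2 : V) (b (n0 : V)) v (b (n2 : V))
          hadj0 n2.2 hne02
          (by have := (hBaut b hb (n0:V) v).mpr hadj0; rwa [hbv] at this)
          (by have := (hBaut b hb v (n2:V)).mpr n2.2; rwa [hbv] at this)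
          (fun hh => hne02 (b.injective hh))
        have h1 := huniq ⟨b, hb⟩ ⟨rfl, hbv, rfl⟩
        have h2 := huniq ⟨b', hb'⟩ ⟨he0.symm, hbv', he2.symm⟩
        have := h1.trans h2.symm
        exact congrArg Subtype.val this
      apply Subtype.ext
      rw [hgt, hgt', hxx, hbb]
    · -- surjectivity
      rintro ⟨⟨⟨p1, p2⟩, ⟨⟨hp1, hp2⟩, hpne⟩⟩, ⟨⟨x, hx⟩, hxker⟩⟩
      have hxv : x v = 0 := hxker
      have hadj0 : Λ.Adj (n0 : V) v := Λ.adj_symm n0.2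
      obtain ⟨gg, ⟨hg0, hgv, hg2⟩, -⟩ := hBt (n0 : V) v (n2 : V) p1 v p2
        hadj0 n2.2 hne02 (Λ.adj_symm hp1) hp2 hpne
      have hmem : twist (gg : Equiv.Perm V) x ∈
          bigG Λ B hBaut ⊓ MulAction.stabilizer (Equiv.Perm (V × ZMod 2)) ((v, i) : V × ZMod 2) := by
        rw [Subgroup.mem_inf]
        constructor
        · exact ⟨gg, gg.2, x, hx, rfl⟩
        · rw [MulAction.mem_stabilizer_iff]
          show twist (gg : Equiv.Perm V) x (v, i) = (v, i)
          rw [twist_apply, hgv, hxv, add_zero]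
      refine ⟨⟨_, hmem⟩, Prod.ext ?_ ?_⟩
      · apply Subtype.ext
        show ((twist (gg : Equiv.Perm V) x ((n0 : V), 0)).1,
          (twist (gg : Equiv.Perm V) x ((n2 : V), 0)).1) = (p1, p2)
        simp [hg0, hg2]
      · apply Subtype.ext
        apply Subtype.ext
        show (fun u => (twist (gg : Equiv.Perm V) x (u, 0)).2) = x
        funext u; simp
  rw [key]
  have hd1 : 1 ≤ d := by
    have hsurj := evLin_surj hreg v
    by_contra hcon
    push_neg at hcon
    interval_cases d
    · -- d = 0 : eigOne is trivial, contradicting surjectivity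
      have : Subsingleton (eigOne Λ) := by
        rw [← Module.finrank_zero_iff (R := ZMod 2)]
        omega
      obtain ⟨z, hz⟩ := hsurj 1
      have : z = 0 := Subsingleton.elim z 0
      rw [this] at hz
      simp at hz
  obtain ⟨k, hk⟩ : ∃ k, d = k + 1 := ⟨d - 1, by omega⟩
  rw [hk]
  have h9 : k + 1 - 1 = k := rfl
  rw [h9, pow_succ]
  ring
end Graph4

section Graph5
open scoped Classical
variable {V : Type*} [Fintype V] {Λ : SimpleGraph V}
variable (hreg : ∀ v : V, Nat.card (Λ.neighborSet v) = 3)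
  (hconn : Λ.Connected) (hd : 2 ≤ Module.finrank (ZMod 2) (eigOne Λ))
  {B : Subgroup (Equiv.Perm V)} (hBaut : ∀ g ∈ B, IsGraphAut Λ g)
  (hBt : SharplyTwoArcTransitiveOn Λ B)

lemma bigG_aut : ∀ g ∈ bigG Λ B hBaut, IsGraphAut (lexK2 Λ) g := by
  rintro g ⟨b, hb, x, hx, rfl⟩ p q
  show Λ.Adj (b p.1) (b q.1) ↔ Λ.Adj p.1 q.1
  exact hBaut b hb p.1 q.1

include hconn hd hreg hBt in
lemma bigG_arc : ArcTransitiveOn (lexK2 Λ) (bigG Λ B hBaut) := by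
  rintro ⟨u, iu⟩ ⟨w, jw⟩ ⟨u', iu'⟩ ⟨w', jw'⟩ hadj hadj'
  have h1 : Λ.Adj u w := hadj
  have h2 : Λ.Adj u' w' := hadj'
  obtain ⟨b, hb, hbu, hbw⟩ := B_arc_trans hreg hBt h1 h2
  obtain ⟨x, hx, hxu, hxw⟩ := eval_edge hconn hd hreg hBaut hBt h1 (iu + iu') (jw + jw')
  refine ⟨twist b x, ⟨b, hb, x, hx, rfl⟩, ?_, ?_⟩
  · show (b u, iu + x u) = (u', iu')
    rw [hbu, hxu, ← add_assoc, CharTwo.add_self_eq_zero, zero_add]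
  · show (b w, jw + x w) = (w', jw')
    rw [hbw, hxw, ← add_assoc, CharTwo.add_self_eq_zero, zero_add]

include hreg in
lemma lex_nbr_mem (v : V) (i : ZMod 2) (q : V × ZMod 2) :
    q ∈ (lexK2 Λ).neighborSet (v, i) ↔ Λ.Adj v q.1 := Iff.rfl

variable (Λ) in
/-- Identification of the neighbourhood in the lexicographic product with `Fin 3 × ZMod 2`. -/
noncomputable def Fequiv (hreg : ∀ v : V, Nat.card (Λ.neighborSet v) = 3) (v : V) (i : ZMod 2) :
    ((lexK2 Λ).neighborSet (v, i)) ≃ Fin 3 × ZMod 2 where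
  toFun ω := (nbr hreg v ⟨ω.val.1, ω.2⟩, ω.val.2)
  invFun m := ⟨(((nbr hreg v).symm m.1 : V), m.2), ((nbr hreg v).symm m.1).2⟩
  left_inv ω := by
    apply Subtype.ext
    show ((((nbr hreg v).symm ((nbr hreg v) ⟨ω.val.1, ω.2⟩)) : V), ω.val.2) = ω.val
    simp
  right_inv m := by
    show ((nbr hreg v ⟨((nbr hreg v).symm m.1 : V), ((nbr hreg v).symm m.1).2⟩), m.2) = m
    simp

/-- Decomposition of elements of the vertex stabiliser. -/
lemma fix_decomp {g : Equiv.Perm (V × ZMod 2)} (hg : g ∈ bigG Λ B hBaut) {v : V} {i : ZMod 2}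
    (hfix : g (v, i) = (v, i)) :
    ∃ b ∈ B, ∃ x ∈ eigOne Λ, b v = v ∧ x v = 0 ∧ g = twist b x := by
  obtain ⟨b, hb, x, hx, rfl⟩ := hg
  rw [twist_apply] at hfix
  have h1 : b v = v := congrArg Prod.fst hfix
  have h2' : i + x v = i := congrArg Prod.snd hfix
  have h2 : x v = 0 := by
    calc x v = (i + x v) + i := by
          rw [add_comm i (x v), add_assoc, CharTwo.add_self_eq_zero, add_zero]
      _ = i + i := by rw [h2']
      _ = 0 := CharTwo.add_self_eq_zero i
  exact ⟨b, hb, x, hx, h1, h2, rfl⟩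

include hconn hd hreg hBaut hBt in
lemma local_iff (v : V) (i : ZMod 2) (p : Equiv.Perm ((lexK2 Λ).neighborSet (v, i))) :
    p ∈ localActionSet (lexK2 Λ) (bigG Λ B hBaut) (v, i) ↔
    ∃ σ : Equiv.Perm (Fin 3), ∃ y : Fin 3 → ZMod 2, y 0 + y 1 + y 2 = 0 ∧
      ∀ ω : ((lexK2 Λ).neighborSet (v, i)),
        Fequiv Λ hreg v i (p ω) = twist3 σ y (Fequiv Λ hreg v i ω) := by
  set ν := nbr hreg v with hν
  constructor
  · rintro ⟨g, hgG, hgfix, hgact⟩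
    obtain ⟨b, hb, x, hx, hbv, hxv, rfl⟩ := fix_decomp hBaut hgG hgfix
    have hsub : ∀ u : V, b u ∈ Λ.neighborSet v ↔ u ∈ Λ.neighborSet v := by
      intro u
      have := hBaut b hb v u
      rw [hbv] at this
      exact ⟨fun h => this.mp h, fun h => this.mpr h⟩
    refine ⟨ν.permCongr (b.subtypePerm hsub), fun k => x ((ν.symm k : Λ.neighborSet v) : V),
      ?_, ?_⟩
    · calc x ((ν.symm 0 : Λ.neighborSet v) : V) + x ((ν.symm 1 : Λ.neighborSet v) : V)
            + x ((ν.symm 2 : Λ.neighborSet v) : V)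
          = ∑ k : Fin 3, x ((ν.symm k : Λ.neighborSet v) : V) := by
            rw [Fin.sum_univ_three]
        _ = ∑ n : Λ.neighborSet v, x (n : V) :=
            Equiv.sum_comp ν.symm (fun n : Λ.neighborSet v => x (n : V))
        _ = ∑ u ∈ Λ.neighborFinset v, x u := (sum_nbrs x v).symm
        _ = x v := (mem_eigOne_iff Λ x).mp hx v
        _ = 0 := hxv
    · intro ω
      have hval : (p ω).val = twist b x ω.val := hgact ω
      have hval1 : (p ω).val.1 = b ω.val.1 := by rw [hval]; rfl
      have hval2 : (p ω).val.2 = ω.val.2 + x ω.val.1 := by rw [hval]; rfl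
      apply Prod.ext
      · show ν ⟨(p ω).val.1, (p ω).2⟩ = (ν.permCongr (b.subtypePerm hsub)) (ν ⟨ω.val.1, ω.2⟩)
        rw [Equiv.permCongr_apply]
        simp only [Equiv.symm_apply_apply]
        apply congrArg ν
        apply Subtype.ext
        exact hval1
      · show (p ω).val.2 = ω.val.2 + x (((ν.symm (ν ⟨ω.val.1, ω.2⟩)) : Λ.neighborSet v) : V)
        rw [hval2]
        simp
  · rintro ⟨σ, y, h0, hint⟩
    obtain ⟨b, hb, hbv, hbn⟩ := Bv_surj hreg hBaut hBt v (ν.symm.permCongr σ)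
    have hsum : ∑ n : Λ.neighborSet v, y (ν n) = 0 := by
      rw [Equiv.sum_comp ν y, Fin.sum_univ_three]
      exact h0
    obtain ⟨x, hx, hxv, hxn⟩ := eval_lemma hconn hd hreg hBaut hBt v (fun n => y (ν n)) hsum
    refine ⟨twist b x, ⟨b, hb, x, hx, rfl⟩, ?_, ?_⟩
    · show (b v, i + x v) = (v, i)
      rw [hbv, hxv, add_zero]
    · intro ω
      have h1 := hint ω
      -- apply F.symm to both sides
      have h2 := congrArg (Fequiv Λ hreg v i).symm h1
      rw [Equiv.symm_apply_apply] at h2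
      rw [h2]
      show ((((ν.symm (twist3 σ y (Fequiv Λ hreg v i ω)).1) : Λ.neighborSet v) : V),
        (twist3 σ y (Fequiv Λ hreg v i ω)).2) = twist b x ω.val
      have hF1 : (Fequiv Λ hreg v i ω).1 = ν ⟨ω.val.1, ω.2⟩ := rfl
      have hF2 : (Fequiv Λ hreg v i ω).2 = ω.val.2 := rfl
      have ht1 : (twist3 σ y (Fequiv Λ hreg v i ω)).1 = σ (ν ⟨ω.val.1, ω.2⟩) := by
        rw [← hF1]; rfl
      have ht2 : (twist3 σ y (Fequiv Λ hreg v i ω)).2 = ω.val.2 + y (ν ⟨ω.val.1, ω.2⟩) := by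
        rw [← hF1, ← hF2]; rfl
      rw [ht1, ht2]
      apply Prod.ext
      · show ((ν.symm (σ (ν ⟨ω.val.1, ω.2⟩)) : Λ.neighborSet v) : V) = (twist b x ω.val).1
        rw [twist_apply]
        have := hbn ⟨ω.val.1, ω.2⟩
        rw [Equiv.permCongr_apply] at this
        simp only [Equiv.symm_symm] at this
        rw [show b ω.val.1 = b ((⟨ω.val.1, ω.2⟩ : Λ.neighborSet v) : V) from rfl, this]
      · show ω.val.2 + y (ν ⟨ω.val.1, ω.2⟩) = (twist b x ω.val).2
        rw [twist_apply]
        show ω.val.2 + y (ν ⟨ω.val.1, ω.2⟩) = ω.val.2 + x ω.val.1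
        rw [show x ω.val.1 = x ((⟨ω.val.1, ω.2⟩ : Λ.neighborSet v) : V) from rfl,
          hxn ⟨ω.val.1, ω.2⟩]
end Graph5

section Final
open scoped Classical
variable {V : Type*} [Fintype V] {Λ : SimpleGraph V}
variable (hreg : ∀ v : V, Nat.card (Λ.neighborSet v) = 3)
  (hconn : Λ.Connected) (hd : 2 ≤ Module.finrank (ZMod 2) (eigOne Λ))
  {B : Subgroup (Equiv.Perm V)} (hBaut : ∀ g ∈ B, IsGraphAut Λ g)
  (hBt : SharplyTwoArcTransitiveOn Λ B)

include hconn hd hreg hBaut hBt in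
lemma local_permIso (v : V) (i : ZMod 2) :
    PermIsomorphic (localActionSet (lexK2 Λ) (bigG Λ B hBaut) ((v, i) : V × ZMod 2))
      ((S46d : Subgroup _) : Set (Equiv.Perm (Equiv.Perm (Fin 4) ⧸ Hd))) := by
  refine ⟨(Fequiv Λ hreg v i).trans e0, fun q => ?_⟩
  rw [SetLike.mem_coe, model_iff q]
  set F := Fequiv Λ hreg v i with hF
  constructor
  · rintro ⟨σ, y, h0, hint⟩
    refine ⟨F.permCongr.symm (twist3 σ y), ?_, ?_⟩
    · rw [local_iff hreg hconn hd hBaut hBt v i]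
      refine ⟨σ, y, h0, fun ω => ?_⟩
      show F ((F.permCongr.symm (twist3 σ y)) ω) = twist3 σ y (F ω)
      rw [Equiv.permCongr_symm, Equiv.permCongr_apply]
      simp
    · intro ω
      have h1 : F ((F.permCongr.symm (twist3 σ y)) ω) = twist3 σ y (F ω) := by
        rw [Equiv.permCongr_symm, Equiv.permCongr_apply]
        simp
      calc (F.trans e0) ((F.permCongr.symm (twist3 σ y)) ω)
          = e0 (F ((F.permCongr.symm (twist3 σ y)) ω)) := rfl
        _ = e0 (twist3 σ y (F ω)) := congrArg e0 h1
        _ = q (e0 (F ω)) := hint (F ω)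
        _ = q ((F.trans e0) ω) := rfl
  · rintro ⟨p, hp, hcomm⟩
    obtain ⟨σ, y, h0, hint⟩ := (local_iff hreg hconn hd hBaut hBt v i p).mp hp
    refine ⟨σ, y, h0, fun m => ?_⟩
    have hω : F (F.symm m) = m := F.apply_symm_apply m
    have h1 := hint (F.symm m)
    rw [hω] at h1
    have h2 := hcomm (F.symm m)
    calc e0 (twist3 σ y m) = e0 (F (p (F.symm m))) := by rw [h1]
      _ = q (e0 (F (F.symm m))) := h2
      _ = q (e0 m) := by rw [hω]
end Final
/-- If `Λ` is a finite connected cubic graph with a sharply 2-arc-transitive group of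
automorphisms `B` and `d := dim E₁(Λ) ≥ 2`, then `Λ[K̄₂]` has an arc-transitive group of
automorphisms `G` with vertex-stabilisers of order `3·2^d` and local action `S₄(6d)`. -/
theorem statement12 {V : Type*} [Fintype V] (Λ : SimpleGraph V) (hconn : Λ.Connected)
    (hreg : ∀ v : V, Nat.card (Λ.neighborSet v) = 3)
    (B : Subgroup (Equiv.Perm V)) (hBaut : ∀ g ∈ B, IsGraphAut Λ g)
    (hBt : SharplyTwoArcTransitiveOn Λ B)
    (hd : 2 ≤ Module.finrank (ZMod 2) (eigOne Λ)) :
    ∃ G : Subgroup (Equiv.Perm (V × ZMod 2)),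
      (∀ g ∈ G, IsGraphAut (lexK2 Λ) g) ∧ ArcTransitiveOn (lexK2 Λ) G ∧
      (∀ v : V × ZMod 2,
        Nat.card ↥(G ⊓ MulAction.stabilizer (Equiv.Perm (V × ZMod 2)) v) =
          3 * 2 ^ Module.finrank (ZMod 2) (eigOne Λ)) ∧
      (∀ v : V × ZMod 2, PermIsomorphic (localActionSet (lexK2 Λ) G v)
        ((S46d : Subgroup _) : Set (Equiv.Perm (Equiv.Perm (Fin 4) ⧸ Hd)))) := by
  classical
  refine ⟨bigG Λ B hBaut, bigG_aut hBaut, bigG_arc hreg hconn hd hBaut hBt, ?_, ?_⟩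
  · rintro ⟨v, i⟩
    exact stab_card hreg hBaut hBt v i
  · rintro ⟨v, i⟩
    exact local_permIso hreg hconn hd hBaut hBt v i
end
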